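/- arXiv:2109.09249 — 3 statements merged into one kernel-verified Lean document; each statement's English description precedes it below -/
import Mathlib

section
/- Let n ≥ 2 and let K_{1,n−1} be the star graph on n vertices. For every tree T on n vertices, the sum of the reciprocals of the n−1 nonzero eigenvalues of the combinatorial Laplacian of T is greater than or equal to the corresponding sum for K_{1,n−1}, with equality if and only if T is isomorphic to K_{1,n−1}. (This expresses that among all simple trees of a fixed size the star has the smallest average hitting time α.) -/
open scoped Classical

noncomputable section

/-- A weighted graph on vertex set `Fin n`: a simple graph together with a symmetric
weight function which is positive on edges and zero on non-edges. -/
structure WGraph (n : ℕ) where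
  G : SimpleGraph (Fin n)
  w : Fin n → Fin n → ℝ
  symm : ∀ u v, w u v = w v u
  pos : ∀ u v, G.Adj u v → 0 < w u v
  zero : ∀ u v, ¬ G.Adj u v → w u v = 0

namespace WGraph

variable {n : ℕ}

/-- The weighted degree `d_G(u) = Σ_v ω(uv)`. -/
def deg (T : WGraph n) (u : Fin n) : ℝ := ∑ v, T.w u v

/-- The volume of the whole graph: sum of all weighted degrees. -/
def vol (T : WGraph n) : ℝ := ∑ u, T.deg u

/-- The combinatorial Laplacian `L = D - A`. -/
def lap (T : WGraph n) : Matrix (Fin n) (Fin n) ℝ :=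
  Matrix.of fun u v => (if u = v then T.deg u else 0) - T.w u v

/-- The normalized Laplacian `𝓛 = D^{-1/2} L D^{-1/2}`. -/
def nlap (T : WGraph n) : Matrix (Fin n) (Fin n) ℝ :=
  Matrix.of fun u v => T.lap u v / (Real.sqrt (T.deg u) * Real.sqrt (T.deg v))

/-- The weight of an (unordered) edge. -/
def ew (T : WGraph n) : Sym2 (Fin n) → ℝ := Sym2.lift ⟨T.w, T.symm⟩

/-- `ω(H)`: the product of the weights of all edges of a (spanning) subgraph `H`. -/
def wOf (T : WGraph n) (H : SimpleGraph (Fin n)) : ℝ := ∏ᶠ e ∈ H.edgeSet, T.ew e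

/-- `τ(G)`: the sum of `ω(H)` over all spanning trees `H` of `G`. -/
def tau (T : WGraph n) : ℝ :=
  ∑ᶠ H ∈ {H : SimpleGraph (Fin n) | H ≤ T.G ∧ H.IsTree}, T.wOf H

/-- The multiset of edge-weights of a weighted graph. -/
def edgeWeights (T : WGraph n) : Multiset ℝ := T.G.edgeFinset.val.map T.ew

end WGraph

/-- The sum of the reciprocals of the nonzero eigenvalues of a hermitian real matrix
(in `ℝ`, `0⁻¹ = 0`, so the zero eigenvalues contribute nothing to the sum). -/
def sumInvEig {n : ℕ} (M : Matrix (Fin n) (Fin n) ℝ) : ℝ :=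
  if h : M.IsHermitian then ∑ i, (h.eigenvalues i)⁻¹ else 0

/-- `H` is a spanning 2-forest of `G`: an acyclic subgraph of `G` on the full
vertex set with exactly two connected components. -/
def IsTwoForestOf {n : ℕ} (G H : SimpleGraph (Fin n)) : Prop :=
  H ≤ G ∧ H.IsAcyclic ∧ Nat.card H.ConnectedComponent = 2

/-- `S(F)`: the product of the numbers of vertices of the components of `F`. -/
def SVal {n : ℕ} (F : SimpleGraph (Fin n)) : ℝ :=
  ∏ᶠ c : F.ConnectedComponent, (Nat.card c.supp : ℝ)

/-- `V_T(F)`: the product over the components of `F` of their volumes in `T`,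
i.e. of the sums of `T`-degrees of their vertices. -/
def VVal {n : ℕ} (T : WGraph n) (F : SimpleGraph (Fin n)) : ℝ :=
  ∏ᶠ c : F.ConnectedComponent, ∑ᶠ u ∈ c.supp, T.deg u

/-- The number of vertices of the connected component of `v` in `H`. -/
def compSize {n : ℕ} (H : SimpleGraph (Fin n)) (v : Fin n) : ℕ :=
  Nat.card ((H.connectedComponentMk v).supp)

/-- The volume of the connected component of `v` in `H`, computed intrinsically
(with the weights of `T`): the sum over vertices `u` of the component of the sum of
weights of edges of the component at `u`. -/
def compVol {n : ℕ} (T : WGraph n) (H : SimpleGraph (Fin n)) (v : Fin n) : ℝ :=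
  ∑ᶠ u ∈ (H.connectedComponentMk v).supp, ∑ᶠ x ∈ (H.connectedComponentMk v).supp, T.w u x

/-- The common part of the two edge-transfer operations: `T'` is obtained from `T` by
deleting the edge `e₂ = v₂v₃` and adding the edge `v₁v₃` carrying the weight of `e₂`,
where `e₁ = v₁v₂` and `e₂ = v₂v₃` are adjacent edges of `T`. -/
def EdgeTransferAux {n : ℕ} (T T' : WGraph n) (v1 v2 v3 : Fin n) : Prop :=
  T.G.Adj v1 v2 ∧ T.G.Adj v2 v3 ∧ v1 ≠ v3 ∧
  T'.G = T.G.deleteEdges {s(v2, v3)} ⊔ SimpleGraph.fromEdgeSet {s(v1, v3)} ∧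
  T'.w v1 v3 = T.w v2 v3 ∧
  (∀ u v : Fin n, s(u, v) ≠ s(v1, v3) → s(u, v) ≠ s(v2, v3) → T'.w u v = T.w u v)

/-- `T` edge-transfers to `T'` with respect to size (via `v₁, v₂, v₃`):
the component `T₁` of `T ∖ {e₁, e₂}` containing `v₁` has more vertices than the
component `T₂` containing `v₂`. -/
def EdgeTransferSize {n : ℕ} (T T' : WGraph n) (v1 v2 v3 : Fin n) : Prop :=
  EdgeTransferAux T T' v1 v2 v3 ∧
  compSize (T.G.deleteEdges {s(v1, v2), s(v2, v3)}) v2 <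
    compSize (T.G.deleteEdges {s(v1, v2), s(v2, v3)}) v1

/-- `T` edge-transfers to `T'` with respect to volume (via `v₁, v₂, v₃`):
the component `T₁` of `T ∖ {e₁, e₂}` containing `v₁` has larger intrinsic volume than
the component `T₂` containing `v₂`. -/
def EdgeTransferVol {n : ℕ} (T T' : WGraph n) (v1 v2 v3 : Fin n) : Prop :=
  EdgeTransferAux T T' v1 v2 v3 ∧
  compVol T (T.G.deleteEdges {s(v1, v2), s(v2, v3)}) v2 <
    compVol T (T.G.deleteEdges {s(v1, v2), s(v2, v3)}) v1

/-- Isomorphism of weighted graphs: a graph isomorphism preserving the weights. -/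
def WIso {n : ℕ} (T T' : WGraph n) : Prop :=
  ∃ f : T.G ≃g T'.G, ∀ u v, T'.w (f u) (f v) = T.w u v

/-- The star graph on `Fin n`, centered at the vertex `0`. -/
def starGraph (n : ℕ) : SimpleGraph (Fin n) :=
  SimpleGraph.fromRel fun u _ => u.val = 0

/-- `T` is a polarized weighted path: its underlying graph is a path
`v₁ v₂ … v_n` and, writing `e_i = v_i v_{i+1}` and `c(e_i) = min {i, n - i}`,
one has `ω(e_i) ≥ ω(e_j)` whenever `c(e_i) ≤ c(e_j)`. -/
def IsPolarizedPath {n : ℕ} (T : WGraph n) : Prop :=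
  ∃ f : SimpleGraph.pathGraph n ≃g T.G,
    ∀ (i j : ℕ) (hi : i + 1 < n) (hj : j + 1 < n),
      min (i + 1) (n - 1 - i) ≤ min (j + 1) (n - 1 - j) →
      T.w (f ⟨j, by omega⟩) (f ⟨j + 1, hj⟩) ≤ T.w (f ⟨i, by omega⟩) (f ⟨i + 1, hi⟩)

/-- Unweighted: adjacency indicator. -/
def adjW {n : ℕ} (G : SimpleGraph (Fin n)) (u v : Fin n) : ℝ := if G.Adj u v then 1 else 0

/-- Unweighted degree. -/
def degG {n : ℕ} (G : SimpleGraph (Fin n)) (u : Fin n) : ℝ := ∑ v, adjW G u v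

/-- The combinatorial Laplacian `L = D - A` of a simple graph. -/
def lapG {n : ℕ} (G : SimpleGraph (Fin n)) : Matrix (Fin n) (Fin n) ℝ :=
  Matrix.of fun u v => (if u = v then degG G u else 0) - adjW G u v

/-- The normalized Laplacian `𝓛 = D^{-1/2} L D^{-1/2}` of a simple graph. -/
def nlapG {n : ℕ} (G : SimpleGraph (Fin n)) : Matrix (Fin n) (Fin n) ℝ :=
  Matrix.of fun u v => lapG G u v / (Real.sqrt (degG G u) * Real.sqrt (degG G v))


set_option linter.unusedSectionVars false
set_option maxHeartbeats 1000000

section AuxProof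

open SimpleGraph Matrix

variable {V : Type*} [Fintype V]

/-- In a tree every path realizes the distance. -/
lemma tree_path_length {G : SimpleGraph V} (hG : G.IsTree) {u v : V}
    (p : G.Walk u v) (hp : p.IsPath) : p.length = G.dist u v := by
  obtain ⟨q, hq, hlen⟩ := hG.isConnected.exists_path_of_dist u v
  have := hG.IsAcyclic.path_unique ⟨p, hp⟩ ⟨q, hq⟩
  rw [← hlen]
  exact congrArg Walk.length (congrArg Subtype.val this)

/-- The closer-neighbor structure in a tree. -/
lemma tree_neighbor_struct {G : SimpleGraph V} (hG : G.IsTree) {u v : V} (hne : u ≠ v) :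
    ∃ w0, G.Adj u w0 ∧ G.dist w0 v + 1 = G.dist u v ∧
      ∀ w, G.Adj u w → w ≠ w0 → G.dist w v = G.dist u v + 1 := by
  classical
  obtain ⟨p, hp, hlen⟩ := hG.isConnected.exists_path_of_dist u v
  set d := G.dist u v with hd
  cases p with
  | nil => exact absurd rfl hne
  | cons h q =>
    rename_i w0
    refine ⟨w0, h, ?_, ?_⟩
    · have hq : q.IsPath := hp.of_cons
      have h1 : q.length = G.dist w0 v := tree_path_length hG q hq
      have h2 : q.length + 1 = d := by simpa [Walk.length_cons] using hlen
      omega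
    · intro w hw hwne
      obtain ⟨r, hr, hrlen⟩ := hG.isConnected.exists_path_of_dist w v
      by_cases hu : u ∈ r.support
      · have hspec := r.take_spec hu
        have hr2 : (r.dropUntil u hu).IsPath := hr.dropUntil hu
        have hr1 : (r.takeUntil u hu).IsPath := hr.takeUntil hu
        have hlen2 : (r.dropUntil u hu).length = d := by
          rw [tree_path_length hG _ hr2]
        have hlensum : (r.takeUntil u hu).length + (r.dropUntil u hu).length = r.length := by
          rw [← Walk.length_append, hspec]
        have hne1 : (r.takeUntil u hu).length ≠ 0 := by
          intro h0
          exact hw.ne' (Walk.eq_of_length_eq_zero h0)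
        have htri : G.dist w v ≤ 1 + d := by
          calc G.dist w v ≤ G.dist w u + G.dist u v := hG.isConnected.dist_triangle
          _ = 1 + d := by rw [SimpleGraph.dist_comm (u := w), (dist_eq_one_iff_adj).2 hw]
        omega
      · have hr' : (Walk.cons hw r).IsPath := hr.cons hu
        have := hG.IsAcyclic.path_unique ⟨Walk.cons hw r, hr'⟩ ⟨Walk.cons h q, hp⟩
        have hveq : (Walk.cons hw r).getVert 1 = (Walk.cons h q).getVert 1 :=
          congrArg (fun (z : G.Path u v) => (z : G.Walk u v).getVert 1) this
        simp only [Walk.getVert_cons_succ, Walk.getVert_zero] at hveq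
        exact absurd hveq hwne


variable {n : ℕ}

/-- distance matrix -/
def Dmat (G : SimpleGraph (Fin n)) : Matrix (Fin n) (Fin n) ℝ :=
  Matrix.of fun u v => (G.dist u v : ℝ)

lemma sum_adjW_mul (G : SimpleGraph (Fin n)) (u : Fin n) (f : Fin n → ℝ) :
    ∑ v, adjW G u v * f v = ∑ w ∈ G.neighborFinset u, f w := by
  unfold adjW
  rw [← Finset.sum_filter_add_sum_filter_not Finset.univ (fun v => G.Adj u v)]
  have h1 : ∀ v ∈ Finset.univ.filter (fun v => G.Adj u v), (if G.Adj u v then (1:ℝ) else 0) * f v = f v := by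
    intro v hv
    simp [Finset.mem_filter.1 hv |>.2]
  have h2 : ∀ v ∈ Finset.univ.filter (fun v => ¬ G.Adj u v), (if G.Adj u v then (1:ℝ) else 0) * f v = 0 := by
    intro v hv
    simp [Finset.mem_filter.1 hv |>.2]
  rw [Finset.sum_congr rfl h1, Finset.sum_congr rfl h2, Finset.sum_const_zero, add_zero]
  congr 1
  ext w
  simp [SimpleGraph.mem_neighborFinset]

lemma degG_eq (G : SimpleGraph (Fin n)) (u : Fin n) : degG G u = (G.degree u : ℝ) := by
  have := sum_adjW_mul G u (fun _ => (1:ℝ))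
  simp only [mul_one] at this
  rw [degG, this, ← SimpleGraph.card_neighborFinset_eq_degree, Finset.sum_const,
    nsmul_eq_mul, mul_one]

lemma neighbor_dist_sum {G : SimpleGraph (Fin n)} (hG : G.IsTree) {u v : Fin n} (hne : u ≠ v) :
    ∑ w ∈ G.neighborFinset u, (G.dist w v : ℝ)
      = degG G u * (G.dist u v + 1) - 2 := by
  obtain ⟨w0, hw0, hc, hother⟩ := tree_neighbor_struct hG hne
  have hmem : w0 ∈ G.neighborFinset u := by simpa using hw0
  rw [← Finset.add_sum_erase _ _ hmem]
  have h1 : ∀ w ∈ (G.neighborFinset u).erase w0, (G.dist w v : ℝ) = (G.dist u v : ℝ) + 1 := by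
    intro w hw
    have h2 := Finset.mem_erase.1 hw
    have := hother w (by simpa using h2.2) h2.1
    rw [this]; push_cast; ring
  rw [Finset.sum_congr rfl h1, Finset.sum_const, Finset.card_erase_of_mem hmem]
  have hcard : 1 ≤ (G.neighborFinset u).card := Finset.card_pos.2 ⟨w0, hmem⟩
  have hc' : (G.dist w0 v : ℝ) = (G.dist u v : ℝ) - 1 := by
    have : ((G.dist w0 v : ℕ) : ℝ) + 1 = (G.dist u v : ℝ) := by exact_mod_cast hc
    linarith
  rw [hc', degG_eq, ← SimpleGraph.card_neighborFinset_eq_degree]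
  have : (((G.neighborFinset u).card - 1 : ℕ) : ℝ) = ((G.neighborFinset u).card : ℝ) - 1 := by
    have := Nat.cast_sub (R := ℝ) hcard
    simpa using this
  rw [nsmul_eq_mul, this]
  ring


/-- all-ones matrix -/
def Jmat (n : ℕ) : Matrix (Fin n) (Fin n) ℝ := Matrix.of fun _ _ => (1 : ℝ)

def Pmat (n : ℕ) : Matrix (Fin n) (Fin n) ℝ := 1 - (n : ℝ)⁻¹ • Jmat n

def Nmat (G : SimpleGraph (Fin n)) : Matrix (Fin n) (Fin n) ℝ :=
  (-(2:ℝ)⁻¹) • (Pmat n * Dmat G * Pmat n)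

lemma lapG_entry (G : SimpleGraph (Fin n)) (u v : Fin n) :
    lapG G u v = (if u = v then degG G u else 0) - adjW G u v := rfl

lemma lapG_mul_entry (G : SimpleGraph (Fin n)) (M : Matrix (Fin n) (Fin n) ℝ) (u v : Fin n) :
    (lapG G * M) u v = degG G u * M u v - ∑ w ∈ G.neighborFinset u, M w v := by
  rw [Matrix.mul_apply]
  simp only [lapG_entry, sub_mul, Finset.sum_sub_distrib, ite_mul, zero_mul]
  rw [Finset.sum_ite_eq, if_pos (Finset.mem_univ u), sum_adjW_mul]

lemma lap_mul_dist {G : SimpleGraph (Fin n)} (hG : G.IsTree) :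
    lapG G * Dmat G = Matrix.of (fun u _ => 2 - degG G u) - (2:ℝ) • 1 := by
  ext u v
  rw [lapG_mul_entry]
  by_cases h : u = v
  · subst h
    have h1 : ∀ w ∈ G.neighborFinset u, (Dmat G) w u = 1 := by
      intro w hw
      have : G.Adj w u := G.adj_symm (by simpa using hw)
      simp [Dmat, SimpleGraph.dist_eq_one_iff_adj.2 this]
    rw [Finset.sum_congr rfl h1, Finset.sum_const, nsmul_eq_mul, mul_one,
      SimpleGraph.card_neighborFinset_eq_degree, ← degG_eq]
    simp [Dmat, Matrix.one_apply]
  · have h2 : ∑ w ∈ G.neighborFinset u, (Dmat G) w v = degG G u * ((G.dist u v : ℝ) + 1) - 2 :=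
      neighbor_dist_sum hG h
    rw [h2]
    simp only [Dmat, Matrix.of_apply, Matrix.sub_apply, Matrix.smul_apply,
      Matrix.one_apply, if_neg h, smul_zero]
    ring

lemma jmat_mul (M : Matrix (Fin n) (Fin n) ℝ) (u v : Fin n) :
    (M * Jmat n) u v = ∑ w, M u w := by
  rw [Matrix.mul_apply]; simp [Jmat]

lemma lap_mul_jmat (G : SimpleGraph (Fin n)) : lapG G * Jmat n = 0 := by
  ext u v
  rw [jmat_mul]
  simp only [lapG_entry, Finset.sum_sub_distrib, Finset.sum_ite_eq,
    if_pos (Finset.mem_univ u), Matrix.zero_apply]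
  exact sub_eq_zero.2 rfl

lemma lapG_transpose (G : SimpleGraph (Fin n)) : (lapG G)ᵀ = lapG G := by
  ext u v
  simp only [Matrix.transpose_apply, lapG_entry, adjW]
  by_cases h : u = v
  · subst h; rfl
  · rw [if_neg h, if_neg (Ne.symm h)]
    congr 1
    simp [SimpleGraph.adj_comm]

lemma dmat_transpose (G : SimpleGraph (Fin n)) : (Dmat G)ᵀ = Dmat G := by
  ext u v; simp [Dmat, SimpleGraph.dist_comm]

lemma pmat_transpose : (Pmat n)ᵀ = Pmat n := by
  ext u v
  simp [Pmat, Jmat, Matrix.one_apply, eq_comm]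

lemma jmat_mul_jmat : Jmat n * Jmat n = (n : ℝ) • Jmat n := by
  ext u v; rw [jmat_mul]; simp [Jmat]

lemma mul_pmat_eq_zero_of_const_rows (f : Fin n → ℝ) (hn : 1 ≤ n) :
    Matrix.of (fun u (_ : Fin n) => f u) * Pmat n = 0 := by
  have hn' : (n : ℝ) ≠ 0 := by positivity
  ext u v
  simp only [Pmat, Matrix.mul_sub, Matrix.mul_one, Matrix.mul_smul]
  have : (Matrix.of (fun u (_ : Fin n) => f u) * Jmat n) u v = (n : ℝ) * f u := by
    rw [jmat_mul]; simp
  simp only [Matrix.sub_apply, Matrix.smul_apply, this]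
  rw [smul_eq_mul, inv_mul_cancel_left₀ hn']
  simp

lemma lap_mul_pmat (G : SimpleGraph (Fin n)) : lapG G * Pmat n = lapG G := by
  simp [Pmat, Matrix.mul_sub, Matrix.mul_smul, lap_mul_jmat]

lemma lap_mul_nmat {G : SimpleGraph (Fin n)} (hG : G.IsTree) (hn : 1 ≤ n) :
    lapG G * Nmat G = Pmat n := by
  rw [Nmat, Matrix.mul_smul, ← mul_assoc, ← mul_assoc, lap_mul_pmat, mul_assoc,
    ← mul_assoc, lap_mul_dist hG]
  rw [Matrix.sub_mul, mul_pmat_eq_zero_of_const_rows _ hn]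
  rw [zero_sub, Matrix.smul_mul, one_mul]
  module

lemma nmat_transpose (G : SimpleGraph (Fin n)) : (Nmat G)ᵀ = Nmat G := by
  rw [Nmat, Matrix.transpose_smul, Matrix.transpose_mul, Matrix.transpose_mul,
    pmat_transpose, dmat_transpose, mul_assoc]

lemma nmat_mul_lap {G : SimpleGraph (Fin n)} (hG : G.IsTree) (hn : 1 ≤ n) :
    Nmat G * lapG G = Pmat n := by
  have := congrArg Matrix.transpose (lap_mul_nmat hG hn)
  rw [Matrix.transpose_mul, nmat_transpose, lapG_transpose, pmat_transpose] at this
  exact this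

lemma pmat_mul_pmat (hn : 1 ≤ n) : Pmat n * Pmat n = Pmat n := by
  have hn' : (n : ℝ) ≠ 0 := by positivity
  have key : ((n:ℝ)⁻¹ • Jmat n) * ((n:ℝ)⁻¹ • Jmat n) = (n:ℝ)⁻¹ • Jmat n := by
    rw [Matrix.smul_mul, Matrix.mul_smul, jmat_mul_jmat, smul_smul, smul_smul]
    congr 1
    field_simp
  rw [Pmat, Matrix.sub_mul, Matrix.mul_sub, Matrix.mul_sub, one_mul, Matrix.mul_one, key]
  rw [one_mul]
  abel

lemma trace_dmat_mul_jmat (G : SimpleGraph (Fin n)) :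
    (Dmat G * Jmat n).trace = ∑ u, ∑ v, (G.dist u v : ℝ) := by
  rw [Matrix.trace]
  congr 1; ext u
  rw [Matrix.diag_apply, jmat_mul]
  rfl

lemma trace_nmat {G : SimpleGraph (Fin n)} (hn : 1 ≤ n) :
    (Nmat G).trace = (∑ u, ∑ v, (G.dist u v : ℝ)) / (2 * n) := by
  have hn' : (n : ℝ) ≠ 0 := by positivity
  rw [Nmat, Matrix.trace_smul, Matrix.trace_mul_cycle, pmat_mul_pmat hn]
  have htd : (Dmat G).trace = 0 := by
    rw [Matrix.trace]
    apply Finset.sum_eq_zero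
    intro u _
    simp [Matrix.diag_apply, Dmat]
  rw [Pmat, Matrix.sub_mul, Matrix.one_mul, Matrix.trace_sub, htd, Matrix.smul_mul,
    Matrix.trace_smul, Matrix.trace_mul_comm, trace_dmat_mul_jmat]
  rw [smul_eq_mul, smul_eq_mul]
  field_simp
  ring


lemma lapG_isHermitian (G : SimpleGraph (Fin n)) : (lapG G).IsHermitian := by
  have := lapG_transpose G
  rw [Matrix.IsHermitian]
  ext u v
  rw [Matrix.conjTranspose_apply, star_trivial]
  exact congrFun (congrFun this u) v

lemma lap_row_sum (G : SimpleGraph (Fin n)) (u : Fin n) : ∑ v, lapG G u v = 0 := by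
  have := congrFun (congrFun (lap_mul_jmat G) u) u
  rw [Matrix.mul_apply] at this
  simpa [Jmat] using this

lemma lap_col_sum (G : SimpleGraph (Fin n)) (v : Fin n) : ∑ u, lapG G u v = 0 := by
  have := lap_row_sum G v
  calc ∑ u, lapG G u v = ∑ u, lapG G v u := by
        refine Finset.sum_congr rfl fun u _ => ?_
        have := lapG_transpose G
        exact (congrFun (congrFun this v) u).symm ▸ rfl
  _ = 0 := this

lemma ones_vecMul_lap (G : SimpleGraph (Fin n)) :
    (fun _ => (1:ℝ)) ᵥ* lapG G = 0 := by
  funext v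
  rw [Matrix.vecMul, dotProduct]
  simpa using lap_col_sum G v

lemma lap_mulVec_apply (G : SimpleGraph (Fin n)) (x : Fin n → ℝ) (u : Fin n) :
    (lapG G *ᵥ x) u = degG G u * x u - ∑ w ∈ G.neighborFinset u, x w := by
  rw [Matrix.mulVec, dotProduct]
  simp only [lapG_entry, sub_mul, Finset.sum_sub_distrib, ite_mul, zero_mul]
  rw [Finset.sum_ite_eq, if_pos (Finset.mem_univ u), sum_adjW_mul]

lemma const_of_lap_mulVec_zero {G : SimpleGraph (Fin n)} (hG : G.Connected) (hn : 1 ≤ n)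
    {x : Fin n → ℝ} (hx : lapG G *ᵥ x = 0) : ∃ c, x = fun _ => c := by
  have hne : Nonempty (Fin n) := ⟨⟨0, hn⟩⟩
  obtain ⟨u0, -, hu0⟩ := Finset.exists_max_image Finset.univ x ⟨Classical.arbitrary _,
    Finset.mem_univ _⟩
  have hmax : ∀ v, x v ≤ x u0 := fun v => hu0 v (Finset.mem_univ v)
  have claim : ∀ u, x u = x u0 → ∀ w, G.Adj u w → x w = x u0 := by
    intro u hu w hw
    have h0 := congrFun hx u
    rw [lap_mulVec_apply] at h0
    have hdeg : degG G u = ((G.neighborFinset u).card : ℝ) := by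
      rw [degG_eq, SimpleGraph.card_neighborFinset_eq_degree]
    have hsum : ∑ w ∈ G.neighborFinset u, (x u0 - x w) = 0 := by
      rw [Finset.sum_sub_distrib, Finset.sum_const, nsmul_eq_mul, ← hdeg]
      rw [Pi.zero_apply, sub_eq_zero] at h0
      rw [← hu, ← h0]
      ring
    have hterm := (Finset.sum_eq_zero_iff_of_nonneg
      (fun w _ => by linarith [hmax w])).1 hsum w (by simpa using hw)
    linarith
  refine ⟨x u0, funext fun v => ?_⟩
  obtain ⟨p⟩ := hG.preconnected u0 v
  clear hx
  have aux : ∀ (a b : Fin n) (p : G.Walk a b), x a = x u0 → x b = x u0 := by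
    intro a b p
    induction p with
    | nil => exact id
    | cons h' q ih => exact fun ha => ih (claim _ ha _ h')
  exact aux u0 v p rfl

lemma nmat_mulVec_ones {G : SimpleGraph (Fin n)} (hn : 1 ≤ n) :
    Nmat G *ᵥ (fun _ => (1:ℝ)) = 0 := by
  have hn' : (n : ℝ) ≠ 0 := by positivity
  have hJ : Jmat n *ᵥ (fun _ => (1:ℝ)) = (n : ℝ) • (fun _ => (1:ℝ)) := by
    funext u
    rw [Matrix.mulVec, dotProduct]
    simp [Jmat]
  have hP : Pmat n *ᵥ (fun _ => (1:ℝ)) = 0 := by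
    rw [Pmat, Matrix.sub_mulVec, Matrix.one_mulVec, Matrix.smul_mulVec, hJ,
      smul_smul, inv_mul_cancel₀ hn', one_smul, sub_self]
  rw [Nmat, Matrix.smul_mulVec, ← Matrix.mulVec_mulVec, hP, Matrix.mulVec_zero,
    smul_zero]

lemma nmat_eigen {G : SimpleGraph (Fin n)} (hG : G.IsTree) (hn : 1 ≤ n)
    (h : (lapG G).IsHermitian) (j : Fin n) :
    Nmat G *ᵥ ⇑(h.eigenvectorBasis j) = (h.eigenvalues j)⁻¹ • ⇑(h.eigenvectorBasis j) := by
  have hLv := h.mulVec_eigenvectorBasis j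
  by_cases hl : h.eigenvalues j = 0
  · rw [hl, zero_smul] at hLv
    obtain ⟨c, hc⟩ := const_of_lap_mulVec_zero hG.isConnected hn hLv
    rw [hl, _root_.inv_zero, zero_smul, hc]
    have : (fun _ : Fin n => c) = c • (fun _ : Fin n => (1:ℝ)) := by
      funext u; simp
    rw [this, Matrix.mulVec_smul, nmat_mulVec_ones hn, smul_zero]
  · have hdot : (fun _ => (1:ℝ)) ⬝ᵥ ⇑(h.eigenvectorBasis j) = 0 := by
      have h1 : (fun _ => (1:ℝ)) ⬝ᵥ (lapG G *ᵥ ⇑(h.eigenvectorBasis j)) = 0 := by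
        rw [dotProduct_mulVec, ones_vecMul_lap, zero_dotProduct]
      rw [hLv, dotProduct_smul, smul_eq_mul] at h1
      exact (mul_eq_zero.1 h1).resolve_left hl
    have hJv : Jmat n *ᵥ ⇑(h.eigenvectorBasis j) = 0 := by
      funext u
      rw [Matrix.mulVec, dotProduct]
      simpa [Jmat, dotProduct] using hdot
    have hPv : Pmat n *ᵥ ⇑(h.eigenvectorBasis j) = ⇑(h.eigenvectorBasis j) := by
      rw [Pmat, Matrix.sub_mulVec, Matrix.one_mulVec, Matrix.smul_mulVec, hJv,
        smul_zero, sub_zero]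
    have key : Nmat G *ᵥ (lapG G *ᵥ ⇑(h.eigenvectorBasis j)) = ⇑(h.eigenvectorBasis j) := by
      rw [Matrix.mulVec_mulVec, nmat_mul_lap hG hn, hPv]
    rw [hLv, Matrix.mulVec_smul] at key
    have h2 := congrArg (fun z => (h.eigenvalues j)⁻¹ • z) key
    simp only [smul_smul, inv_mul_cancel₀ hl, one_smul] at h2
    exact h2

lemma sumInvEig_lapG {G : SimpleGraph (Fin n)} (hG : G.IsTree) (hn : 1 ≤ n) :
    sumInvEig (lapG G) = (∑ u, ∑ v, (G.dist u v : ℝ)) / (2 * n) := by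
  have h : (lapG G).IsHermitian := lapG_isHermitian G
  rw [sumInvEig, dif_pos h, ← trace_nmat hn]
  set U : Matrix (Fin n) (Fin n) ℝ := (h.eigenvectorUnitary : Matrix (Fin n) (Fin n) ℝ) with hU
  have hNU : Nmat G * U = U * Matrix.diagonal (fun i => (h.eigenvalues i)⁻¹) := by
    ext i j
    rw [Matrix.mul_diagonal]
    have := congrFun (nmat_eigen hG hn h j) i
    rw [Matrix.mulVec, dotProduct] at this
    rw [Matrix.mul_apply]
    calc ∑ k, Nmat G i k * U k j = ∑ k, Nmat G i k * (h.eigenvectorBasis j) k := rfl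
    _ = (h.eigenvalues j)⁻¹ • (h.eigenvectorBasis j) i := this
    _ = U i j * (h.eigenvalues j)⁻¹ := by
        rw [smul_eq_mul, mul_comm]; rfl
  have hUU : U * star U = 1 := (Matrix.mem_unitaryGroup_iff).mp h.eigenvectorUnitary.2
  have hUU' : star U * U = 1 := (Matrix.mem_unitaryGroup_iff').mp h.eigenvectorUnitary.2
  have : Nmat G = U * Matrix.diagonal (fun i => (h.eigenvalues i)⁻¹) * star U := by
    rw [← hNU, Matrix.mul_assoc, hUU, Matrix.mul_one]
  rw [this, Matrix.trace_mul_cycle, hUU', Matrix.one_mul, Matrix.trace_diagonal]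


/-- lower-bound profile for distances -/
def dd (G : SimpleGraph (Fin n)) (u v : Fin n) : ℕ :=
  if u = v then 0 else if G.Adj u v then 1 else 2

def sumdist (G : SimpleGraph (Fin n)) : ℕ := ∑ u, ∑ v, G.dist u v

lemma dd_le_dist {G : SimpleGraph (Fin n)} (hG : G.Connected) (u v : Fin n) :
    dd G u v ≤ G.dist u v := by
  rw [dd]
  by_cases h : u = v
  · simp [h]
  rw [if_neg h]
  by_cases ha : G.Adj u v
  · rw [if_pos ha, SimpleGraph.dist_eq_one_iff_adj.2 ha]
  · rw [if_neg ha]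
    have h1 : 1 ≤ G.dist u v := hG.pos_dist_of_ne h
    rcases Nat.lt_or_ge (G.dist u v) 2 with h2 | h2
    · interval_cases hd : G.dist u v
      · exact absurd (SimpleGraph.dist_eq_one_iff_adj.1 hd) ha
    · exact h2

lemma sum_dd_eq {G : SimpleGraph (Fin n)} (hG : G.IsTree) (hn : 1 ≤ n) :
    ∑ u, ∑ v, dd G u v = 2 * (n - 1) ^ 2 := by
  have key : ∀ u v : Fin n, dd G u v + (if G.Adj u v then 1 else 0)
      = (if u = v then 0 else 2) := by
    intro u v
    rw [dd]
    by_cases h : u = v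
    · simp [h]
    · by_cases ha : G.Adj u v <;> simp [h, ha]
  have h1 : ∀ u : Fin n, ∑ v, (if u = v then (0:ℕ) else 2) = 2 * (n - 1) := by
    intro u
    have : ∀ v : Fin n, (if u = v then (0:ℕ) else 2) + (if u = v then 2 else 0) = 2 := by
      intro v; by_cases h : u = v <;> simp [h]
    have hs := Finset.sum_congr rfl (fun v (_ : v ∈ Finset.univ) => this v)
    rw [Finset.sum_add_distrib, Finset.sum_ite_eq, if_pos (Finset.mem_univ u),
      Finset.sum_const, Finset.card_univ, Fintype.card_fin] at hs
    simp only [smul_eq_mul, mul_one] at hs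
    omega
  have h2 : ∀ u : Fin n, ∑ v, (if G.Adj u v then (1:ℕ) else 0) = G.degree u := by
    intro u
    rw [← SimpleGraph.card_neighborFinset_eq_degree, SimpleGraph.neighborFinset_eq_filter,
      Finset.card_filter]
  have hdeg : ∑ u, G.degree u = 2 * (n - 1) := by
    have hc := hG.card_edgeFinset
    rw [Fintype.card_fin] at hc
    rw [SimpleGraph.sum_degrees_eq_twice_card_edges]
    omega
  have hbig : (∑ u, ∑ v, dd G u v) + 2 * (n - 1) = n * (2 * (n - 1)) := by
    calc (∑ u, ∑ v, dd G u v) + 2 * (n - 1)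
        = (∑ u, ∑ v, dd G u v) + ∑ u, G.degree u := by rw [hdeg]
      _ = ∑ u : Fin n, (∑ v, dd G u v + ∑ v, (if G.Adj u v then (1:ℕ) else 0)) := by
          rw [Finset.sum_add_distrib]
          congr 1
          exact (Finset.sum_congr rfl fun u _ => (h2 u).symm)
      _ = ∑ u : Fin n, ∑ v, (dd G u v + (if G.Adj u v then (1:ℕ) else 0)) := by
          refine Finset.sum_congr rfl fun u _ => ?_
          rw [Finset.sum_add_distrib]
      _ = ∑ u : Fin n, ∑ v, (if u = v then (0:ℕ) else 2) := by
          refine Finset.sum_congr rfl fun u _ => Finset.sum_congr rfl fun v _ => key u v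
      _ = ∑ u : Fin n, 2 * (n - 1) := Finset.sum_congr rfl fun u _ => h1 u
      _ = n * (2 * (n - 1)) := by rw [Finset.sum_const, Finset.card_univ, Fintype.card_fin,
            smul_eq_mul]
  obtain ⟨m, rfl⟩ : ∃ m, n = m + 1 := ⟨n - 1, by omega⟩
  have hn2 : (m + 1) * (2 * (m + 1 - 1)) = 2 * (m * m) + 2 * m := by
    simp only [Nat.add_sub_cancel]; ring
  rw [hn2] at hbig
  simp only [Nat.add_sub_cancel]
  have : ∑ u : Fin (m+1), ∑ v, dd G u v = 2 * (m * m) := by omega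
  rw [this]; ring

lemma no_two_paths {G : SimpleGraph (Fin n)} (hA : G.IsAcyclic) {u v : Fin n}
    (p q : G.Walk u v) (hp : p.IsPath) (hq : q.IsPath) (hne : p.length ≠ q.length) : False := by
  have := hA.path_unique ⟨p, hp⟩ ⟨q, hq⟩
  exact hne (congrArg (fun z : G.Path u v => (z : G.Walk u v).length) this)

lemma htri {G : SimpleGraph (Fin n)} (hA : G.IsAcyclic) {a b c : Fin n}
    (hab : G.Adj a b) (hbc : G.Adj b c) (hac : G.Adj a c) : False := by
  have hp : (SimpleGraph.Walk.cons hac SimpleGraph.Walk.nil).IsPath := by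
    simp [SimpleGraph.Walk.isPath_def, hac.ne]
  have hq : (SimpleGraph.Walk.cons hab (SimpleGraph.Walk.cons hbc SimpleGraph.Walk.nil)).IsPath := by
    simp [SimpleGraph.Walk.isPath_def, hab.ne, hbc.ne, hac.ne]
  exact no_two_paths hA _ _ hp hq (by simp)

lemma midpoint_of_dist_two {G : SimpleGraph (Fin n)} (hG : G.Connected) {u v : Fin n}
    (h : G.dist u v = 2) : ∃ w, G.Adj u w ∧ G.Adj w v := by
  obtain ⟨p, hlen⟩ := hG.exists_walk_length_eq_dist u v
  rw [h] at hlen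
  cases p with
  | nil => simp at hlen
  | cons h1 q =>
    cases q with
    | nil => simp at hlen
    | cons h2 r =>
      rename_i w x
      simp only [SimpleGraph.Walk.length_cons] at hlen
      have hr0 : r.length = 0 := by omega
      have hx : x = v := SimpleGraph.Walk.eq_of_length_eq_zero hr0
      subst hx
      exact ⟨w, h1, h2⟩

/-- A tree of diameter at most two has a universal vertex. -/
lemma universal_of_diam_two {G : SimpleGraph (Fin n)} (hG : G.IsTree) (hn : 2 ≤ n)
    (hdiam : ∀ u v, G.dist u v ≤ 2) : ∃ m, ∀ z, z ≠ m → G.Adj m z := by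
  have hconn := hG.isConnected
  have hA := hG.IsAcyclic
  have dist2 : ∀ a b : Fin n, a ≠ b → ¬ G.Adj a b → ∃ w, G.Adj a w ∧ G.Adj w b := by
    intro a b hab hnadj
    apply midpoint_of_dist_two hconn
    have h1 : 1 ≤ G.dist a b := hconn.pos_dist_of_ne hab
    have h2 : G.dist a b ≤ 2 := hdiam a b
    have h3 : G.dist a b ≠ 1 := fun h => hnadj (SimpleGraph.dist_eq_one_iff_adj.1 h)
    omega
  -- get an edge
  obtain ⟨u0, v0, huv⟩ : ∃ u v, G.Adj u v := by
    have hne : (⟨0, by omega⟩ : Fin n) ≠ ⟨1, by omega⟩ := by simp [Fin.ext_iff]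
    by_cases hadj : G.Adj ⟨0, by omega⟩ ⟨1, by omega⟩
    · exact ⟨_, _, hadj⟩
    · obtain ⟨w, hw, -⟩ := dist2 _ _ hne hadj
      exact ⟨_, _, hw⟩
  -- C1 : every other vertex is adjacent to u0 or v0
  have C1 : ∀ z, z ≠ u0 → z ≠ v0 → (G.Adj u0 z ∨ G.Adj v0 z) := by
    intro z hz1 hz2
    by_contra hcon
    push_neg at hcon
    obtain ⟨hn1, hn2⟩ := hcon
    obtain ⟨w, hzw, hwu⟩ := dist2 z u0 hz1 (fun h => hn1 h.symm)
    obtain ⟨w', hzw', hwv⟩ := dist2 z v0 hz2 (fun h => hn2 h.symm)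
    have hwv0 : w ≠ v0 := fun h => hn2 (h ▸ hzw).symm
    have hwu0 : w' ≠ u0 := fun h => hn1 (h ▸ hzw').symm
    by_cases hww : w = w'
    · subst hww
      exact htri hA huv hwv.symm hwu.symm
    · -- two distinct paths z → v0 : [z,w,u0,v0] and [z,w',v0]
      have hp : (SimpleGraph.Walk.cons hzw (SimpleGraph.Walk.cons hwu
          (SimpleGraph.Walk.cons huv SimpleGraph.Walk.nil))).IsPath := by
        simp [SimpleGraph.Walk.isPath_def, hzw.ne, hwu.ne, huv.ne, hz1, hz2, hwv0]
      have hq : (SimpleGraph.Walk.cons hzw' (SimpleGraph.Walk.cons hwv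
          SimpleGraph.Walk.nil)).IsPath := by
        simp [SimpleGraph.Walk.isPath_def, hzw'.ne, hwv.ne, hz2]
      exact no_two_paths hA _ _ hp hq (by simp)
  -- C2 : cannot have private neighbors on both sides
  have C2 : ∀ a b, a ≠ u0 → a ≠ v0 → b ≠ u0 → b ≠ v0 → G.Adj u0 a → G.Adj v0 b → False := by
    intro a b ha1 ha2 hb1 hb2 hua hvb
    by_cases hab : a = b
    · subst hab
      exact htri hA huv hvb hua
    by_cases hadj : G.Adj a b
    · -- 4-cycle: paths u0 → b : [u0,v0,b] and [u0,a,b]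
      have hp : (SimpleGraph.Walk.cons huv (SimpleGraph.Walk.cons hvb
          SimpleGraph.Walk.nil)).IsPath := by
        simp [SimpleGraph.Walk.isPath_def, huv.ne, hvb.ne, Ne.symm hb1]
      have hq : (SimpleGraph.Walk.cons hua (SimpleGraph.Walk.cons hadj
          SimpleGraph.Walk.nil)).IsPath := by
        simp [SimpleGraph.Walk.isPath_def, hua.ne, hadj.ne, Ne.symm hb1]
      have := hA.path_unique ⟨_, hp⟩ ⟨_, hq⟩
      have hveq := congrArg (fun z : G.Path u0 b => (z : G.Walk u0 b).getVert 1) this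
      simp only [SimpleGraph.Walk.getVert_cons_succ, SimpleGraph.Walk.getVert_zero] at hveq
      exact ha2 hveq.symm
    · obtain ⟨w, haw, hwb⟩ := dist2 a b hab hadj
      by_cases hw1 : w = u0
      · subst hw1
        exact htri hA huv hvb hwb
      by_cases hw2 : w = v0
      · subst hw2
        exact htri hA huv haw.symm hua
      · -- paths u0 → w : [u0,a,w] and [u0,v0,b,w]
        have hp : (SimpleGraph.Walk.cons hua (SimpleGraph.Walk.cons haw
            SimpleGraph.Walk.nil)).IsPath := by
          simp [SimpleGraph.Walk.isPath_def, hua.ne, haw.ne, Ne.symm hw1]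
        have hq : (SimpleGraph.Walk.cons huv (SimpleGraph.Walk.cons hvb
            (SimpleGraph.Walk.cons hwb.symm SimpleGraph.Walk.nil))).IsPath := by
          simp [SimpleGraph.Walk.isPath_def, huv.ne, hvb.ne, hwb.ne, hwb.ne', Ne.symm hb1,
            Ne.symm hw1, Ne.symm hw2]
        exact no_two_paths hA _ _ hp hq (by simp)
  by_cases hcase : ∃ b, b ≠ u0 ∧ b ≠ v0 ∧ G.Adj v0 b
  · obtain ⟨b, hb1, hb2, hvb⟩ := hcase
    refine ⟨v0, fun z hz => ?_⟩
    by_cases hz0 : z = u0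
    · subst hz0; exact huv.symm
    · rcases C1 z hz0 hz with h | h
      · exact absurd (C2 z b hz0 hz hb1 hb2 h hvb) not_false
      · exact h
  · push_neg at hcase
    refine ⟨u0, fun z hz => ?_⟩
    by_cases hz0 : z = v0
    · subst hz0; exact huv
    · rcases C1 z hz hz0 with h | h
      · exact h
      · exact absurd (hcase z hz hz0) (not_not.2 h)

lemma adj_char_of_universal {G : SimpleGraph (Fin n)} (hA : G.IsAcyclic) {m : Fin n}
    (hm : ∀ z, z ≠ m → G.Adj m z) (x y : Fin n) :
    G.Adj x y ↔ x ≠ y ∧ (x = m ∨ y = m) := by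
  constructor
  · intro h
    refine ⟨h.ne, ?_⟩
    by_contra hcon
    push_neg at hcon
    exact htri hA (hm x hcon.1) h (hm y hcon.2)
  · rintro ⟨hne, h | h⟩
    · subst h; exact hm y (Ne.symm hne)
    · subst h; exact (hm x hne).symm

lemma starGraph_adj [NeZero n] {x y : Fin n} :
    (_root_.starGraph n).Adj x y ↔ x ≠ y ∧ (x = 0 ∨ y = 0) := by
  rw [_root_.starGraph, SimpleGraph.fromRel_adj]
  constructor
  · rintro ⟨hne, h | h⟩
    · exact ⟨hne, Or.inl (Fin.ext (by simpa using h))⟩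
    · exact ⟨hne, Or.inr (Fin.ext (by simpa using h))⟩
  · rintro ⟨hne, h | h⟩
    · subst h; exact ⟨hne, Or.inl rfl⟩
    · subst h; exact ⟨hne, Or.inr rfl⟩

lemma iso_star_of_universal {G : SimpleGraph (Fin n)} (hA : G.IsAcyclic) (hn : 1 ≤ n)
    {m : Fin n} (hm : ∀ z, z ≠ m → G.Adj m z) : Nonempty (G ≃g _root_.starGraph n) := by
  have : NeZero n := ⟨by omega⟩
  refine ⟨⟨Equiv.swap m 0, ?_⟩⟩
  intro x y
  rw [_root_.starGraph_adj, adj_char_of_universal hA hm]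
  have hswap : ∀ z : Fin n, Equiv.swap m 0 z = 0 ↔ z = m := by
    intro z
    constructor
    · intro h
      have := (Equiv.swap m 0).injective (a₁ := z) (a₂ := m)
      exact this (by rw [h, Equiv.swap_apply_left])
    · intro h; rw [h, Equiv.swap_apply_left]
  constructor
  · rintro ⟨hne, h | h⟩
    · exact ⟨fun hc => hne (by rw [hc]), Or.inl ((hswap x).1 h)⟩
    · exact ⟨fun hc => hne (by rw [hc]), Or.inr ((hswap y).1 h)⟩
  · rintro ⟨hne, h | h⟩
    · exact ⟨fun hc => hne ((Equiv.swap m 0).injective hc), Or.inl ((hswap x).2 h)⟩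
    · exact ⟨fun hc => hne ((Equiv.swap m 0).injective hc), Or.inr ((hswap y).2 h)⟩

lemma universal_of_iso_star [NeZero n] {G : SimpleGraph (Fin n)}
    (f : G ≃g _root_.starGraph n) : ∀ z, z ≠ f.symm 0 → G.Adj (f.symm 0) z := by
  intro z hz
  have h1 : G.Adj (f.symm 0) z ↔ (_root_.starGraph n).Adj (f (f.symm 0)) (f z) := (f.map_adj_iff).symm
  rw [h1, RelIso.apply_symm_apply, _root_.starGraph_adj]
  refine ⟨?_, Or.inl rfl⟩
  intro hc
  exact hz (by rw [← RelIso.symm_apply_apply f z, hc])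

lemma starGraph_connected (hn : 1 ≤ n) : (_root_.starGraph n).Connected := by
  have : NeZero n := ⟨by omega⟩
  rw [SimpleGraph.connected_iff]
  refine ⟨fun u v => ?_, ⟨0⟩⟩
  have key : ∀ w : Fin n, (_root_.starGraph n).Reachable 0 w := by
    intro w
    by_cases h : w = 0
    · rw [h]
    · exact (_root_.starGraph_adj.2 ⟨Ne.symm h, Or.inl rfl⟩).reachable
  exact (key u).symm.trans (key v)

lemma starGraph_acyclic (hn : 1 ≤ n) : (_root_.starGraph n).IsAcyclic := by
  have : NeZero n := ⟨by omega⟩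
  rw [SimpleGraph.isAcyclic_iff_forall_adj_isBridge]
  intro v w hvw
  rw [SimpleGraph.isBridge_iff]
  rcases _root_.starGraph_adj.1 hvw with ⟨hne, h | h⟩
  · subst h
    intro hreach
    obtain ⟨p⟩ := hreach.symm
    cases p with
    | nil => exact hne rfl
    | cons h q =>
      rename_i y
      rw [SimpleGraph.deleteEdges_adj] at h
      obtain ⟨ha, hne2⟩ := h
      apply hne2
      rcases _root_.starGraph_adj.1 ha with ⟨hne3, h0 | h0⟩
      · exact absurd h0 (Ne.symm hne)
      · subst h0
        rw [Set.mem_singleton_iff]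
        simp [Sym2.eq_swap]
  · subst h
    intro hreach
    obtain ⟨p⟩ := hreach
    cases p with
    | nil => exact hne rfl
    | cons h q =>
      rename_i y
      rw [SimpleGraph.deleteEdges_adj] at h
      obtain ⟨ha, hne2⟩ := h
      apply hne2
      rcases _root_.starGraph_adj.1 ha with ⟨hne3, h0 | h0⟩
      · exact absurd h0 hne
      · subst h0
        rw [Set.mem_singleton_iff]

lemma starGraph_isTree (hn : 1 ≤ n) : (_root_.starGraph n).IsTree :=
  ⟨starGraph_connected hn, starGraph_acyclic hn⟩

lemma dist_eq_dd_of_universal {G : SimpleGraph (Fin n)} (hG : G.IsTree)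
    {m : Fin n} (hm : ∀ z, z ≠ m → G.Adj m z) (u v : Fin n) :
    G.dist u v = dd G u v := by
  have hconn := hG.isConnected
  refine le_antisymm ?_ (dd_le_dist hconn u v)
  rw [dd]
  by_cases h : u = v
  · simp [h]
  rw [if_neg h]
  by_cases ha : G.Adj u v
  · rw [if_pos ha, SimpleGraph.dist_eq_one_iff_adj.2 ha]
  · rw [if_neg ha]
    have hum : u ≠ m := fun hc => ha (by subst hc; exact hm v (Ne.symm h))
    have hvm : v ≠ m := fun hc => ha (by subst hc; exact (hm u h.elim).symm)
    calc G.dist u v ≤ (SimpleGraph.Walk.cons (hm u hum).symm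
        (SimpleGraph.Walk.cons (hm v hvm) SimpleGraph.Walk.nil)).length :=
          SimpleGraph.dist_le _
    _ = 2 := rfl


end AuxProof

theorem stmt1 {n : ℕ} (hn : 2 ≤ n) (T : SimpleGraph (Fin n)) (hT : T.IsTree) :
    sumInvEig (lapG (starGraph n)) ≤ sumInvEig (lapG T) ∧
    (sumInvEig (lapG T) = sumInvEig (lapG (starGraph n)) ↔
      Nonempty (T ≃g starGraph n)) := by
  have hn1 : 1 ≤ n := by omega
  haveI : NeZero n := ⟨by omega⟩
  have hstar : (starGraph n).IsTree := starGraph_isTree hn1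
  have hm0 : ∀ z : Fin n, z ≠ 0 → (starGraph n).Adj 0 z :=
    fun z hz => starGraph_adj.2 ⟨Ne.symm hz, Or.inl rfl⟩
  have hTsum := sumInvEig_lapG hT hn1
  have hSsum := sumInvEig_lapG hstar hn1
  have hcast : ∀ G : SimpleGraph (Fin n),
      (∑ u, ∑ v, (G.dist u v : ℝ)) = ((sumdist G : ℕ) : ℝ) := by
    intro G
    rw [sumdist]
    push_cast
    rfl
  rw [hcast] at hTsum hSsum
  have hstarVal : sumdist (starGraph n) = 2 * (n - 1) ^ 2 := by
    rw [sumdist, Finset.sum_congr rfl (fun u _ => Finset.sum_congr rfl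
      (fun v _ => dist_eq_dd_of_universal hstar hm0 u v))]
    exact sum_dd_eq hstar hn1
  have hTlow : 2 * (n - 1) ^ 2 ≤ sumdist T := by
    rw [← sum_dd_eq hT hn1, sumdist]
    exact Finset.sum_le_sum fun u _ => Finset.sum_le_sum fun v _ =>
      dd_le_dist hT.isConnected u v
  have h2n : (0:ℝ) < 2 * n := by positivity
  constructor
  · rw [hTsum, hSsum, hstarVal]
    apply div_le_div_of_nonneg_right (c := 2 * (n:ℝ)) ?_ (le_of_lt h2n) |>.trans_eq rfl
    exact_mod_cast hTlow
  · rw [hTsum, hSsum, hstarVal]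
    have hdiv : ((sumdist T : ℝ) / (2 * n) = ((2 * (n - 1) ^ 2 : ℕ) : ℝ) / (2 * n))
        ↔ sumdist T = 2 * (n - 1) ^ 2 := by
      rw [div_eq_div_iff (ne_of_gt h2n) (ne_of_gt h2n)]
      constructor
      · intro h
        have := mul_right_cancel₀ (ne_of_gt h2n) h
        exact_mod_cast this
      · intro h; rw [h]
    rw [hdiv]
    constructor
    · intro heq
      -- pointwise equality of distances with the lower-bound profile
      have hsums : ∑ u, ∑ v, dd T u v = ∑ u, ∑ v, T.dist u v := by
        rw [sum_dd_eq hT hn1, ← heq]; rfl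
      have houter := (Finset.sum_eq_sum_iff_of_le
        (fun u (_ : u ∈ Finset.univ) => Finset.sum_le_sum
          (fun v (_ : v ∈ Finset.univ) => dd_le_dist hT.isConnected u v))).mp hsums
      have hpt : ∀ u v : Fin n, dd T u v = T.dist u v := by
        intro u v
        have hinner := (Finset.sum_eq_sum_iff_of_le
          (fun v (_ : v ∈ Finset.univ) => dd_le_dist hT.isConnected u v)).mp
          (houter u (Finset.mem_univ u))
        exact hinner v (Finset.mem_univ v)
      have hdiam : ∀ u v : Fin n, T.dist u v ≤ 2 := by
        intro u v
        rw [← hpt, dd]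
        by_cases h : u = v
        · simp [h]
        · rw [if_neg h]
          by_cases ha : T.Adj u v <;> simp [ha]
      obtain ⟨m, hm⟩ := universal_of_diam_two hT hn hdiam
      exact iso_star_of_universal hT.IsAcyclic hn1 hm
    · rintro ⟨f⟩
      have hm := universal_of_iso_star f
      rw [sumdist, Finset.sum_congr rfl (fun u _ => Finset.sum_congr rfl
        (fun v _ => dist_eq_dd_of_universal hT hm u v))]
      exact sum_dd_eq hT hn1
end
end

section
/- Let n ≥ 2 and let K_{1,n−1} be the star graph on n vertices. For every tree T on n vertices, the sum of the reciprocals of the n−1 nonzero eigenvalues of the normalized Laplacian of T is greater than or equal to the corresponding sum for K_{1,n−1}, with equality if and only if T is isomorphic to K_{1,n−1}. (This expresses that among all simple trees of a fixed size the star has the smallest Kemeny's constant κ.) -/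
open scoped Classical

noncomputable section

namespace KemenyAux

open SimpleGraph Finset Matrix

lemma path_length_eq_dist {V : Type*} [DecidableEq V] {G : SimpleGraph V} (hT : G.IsTree) {u w : V}
    (p : G.Walk u w) (hp : p.IsPath) : p.length = G.dist u w := by
  have h1 : G.dist u w ≤ p.length := SimpleGraph.dist_le p
  obtain ⟨q, hq⟩ := (hT.isConnected u w).exists_walk_length_eq_dist
  have hun : (⟨p, hp⟩ : G.Path u w) = ⟨q.bypass, q.bypass_isPath⟩ :=
    hT.IsAcyclic.path_unique _ _
  have h2 : p.length = q.bypass.length := by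
    have := congrArg (fun r : G.Path u w => r.val.length) hun
    simpa using this
  have h3 : q.bypass.length ≤ q.length := q.length_bypass_le
  omega

lemma neighbor_dist {V : Type*} [DecidableEq V] {G : SimpleGraph V} (hT : G.IsTree) {u w : V}
    (huw : u ≠ w) : ∃ c, G.Adj u c ∧ G.dist c w + 1 = G.dist u w ∧
      ∀ v, G.Adj u v → v ≠ c → G.dist v w = G.dist u w + 1 := by
  obtain ⟨q, hq⟩ := (hT.isConnected u w).exists_walk_length_eq_dist
  obtain ⟨p, hp, hlen⟩ : ∃ p : G.Walk u w, p.IsPath ∧ p.length = G.dist u w :=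
    ⟨q.bypass, q.bypass_isPath, path_length_eq_dist hT _ q.bypass_isPath⟩
  have hd1 : 1 ≤ G.dist u w := (hT.isConnected).pos_dist_of_ne huw
  cases p with
  | nil => simp only [SimpleGraph.Walk.length_nil] at hlen; omega
  | cons h r =>
      rename_i c
      refine ⟨c, h, ?_, ?_⟩
      · have hrp : r.IsPath := hp.of_cons
        have : r.length = G.dist c w := path_length_eq_dist hT r hrp
        simp only [SimpleGraph.Walk.length_cons] at hlen
        omega
      · intro v hv hvc
        obtain ⟨q2, hq2⟩ := (hT.isConnected v w).exists_walk_length_eq_dist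
        obtain ⟨r2, hr2p, hlen2⟩ : ∃ r2 : G.Walk v w, r2.IsPath ∧ r2.length = G.dist v w :=
          ⟨q2.bypass, q2.bypass_isPath, path_length_eq_dist hT _ q2.bypass_isPath⟩
        by_cases hu : u ∈ r2.support
        · have htake : (r2.takeUntil u hu).IsPath := hr2p.takeUntil hu
          have hdrop : (r2.dropUntil u hu).IsPath := hr2p.dropUntil hu
          have hsing : (⟨r2.takeUntil u hu, htake⟩ : G.Path v u) =
              SimpleGraph.Path.singleton hv.symm := hT.IsAcyclic.path_unique _ _
          have hst : (r2.takeUntil u hu).length = 1 := by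
            have := congrArg (fun r : G.Path v u => r.val.length) hsing
            simpa [SimpleGraph.Path.singleton] using this
          have hsd : (r2.dropUntil u hu).length = G.dist u w :=
            path_length_eq_dist hT _ hdrop
          have hspec : (r2.takeUntil u hu).append (r2.dropUntil u hu) = r2 :=
            r2.take_spec hu
          have hL : (r2.takeUntil u hu).length + (r2.dropUntil u hu).length = r2.length := by
            have := congrArg SimpleGraph.Walk.length hspec
            rwa [SimpleGraph.Walk.length_append] at this
          omega
        · have hcp : (SimpleGraph.Walk.cons hv r2).IsPath :=
            (SimpleGraph.Walk.cons_isPath_iff _ _).2 ⟨hr2p, hu⟩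
          have huniq : (⟨SimpleGraph.Walk.cons hv r2, hcp⟩ : G.Path u w) =
              ⟨SimpleGraph.Walk.cons h r, hp⟩ := hT.IsAcyclic.path_unique _ _
          have hvc' : v = c := by
            have := congrArg (fun z : G.Path u w => z.val.getVert 1) huniq
            simpa using this
          exact absurd hvc' hvc


lemma neighborFinset_eq {G : SimpleGraph (Fin n)} (u : Fin n) :
    G.neighborFinset u = Finset.univ.filter (G.Adj u) := by
  ext v; simp

lemma adjW_sum_eq {G : SimpleGraph (Fin n)} (u : Fin n) (f : Fin n → ℝ) :
    ∑ v, adjW G u v * f v = ∑ v ∈ G.neighborFinset u, f v := by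
  rw [neighborFinset_eq, Finset.sum_filter]
  exact Finset.sum_congr rfl fun v _ => by by_cases h : G.Adj u v <;> simp [adjW, h]

lemma degG_eq {G : SimpleGraph (Fin n)} (u : Fin n) : degG G u = (G.degree u : ℝ) := by
  rw [degG, SimpleGraph.degree, neighborFinset_eq]
  rw [show (∑ v, adjW G u v) = ∑ v, if G.Adj u v then (1:ℝ) else 0 from rfl]
  rw [Finset.sum_boole]

lemma degree_pos {G : SimpleGraph (Fin n)} (hn : 2 ≤ n) (hT : G.IsTree) (u : Fin n) :
    1 ≤ G.degree u := by
  obtain ⟨w, hw⟩ := Fintype.exists_ne_of_one_lt_card (by simp; omega) u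
  obtain ⟨c, hc, -, -⟩ := neighbor_dist hT (Ne.symm hw)
  rw [← SimpleGraph.card_neighborFinset_eq_degree]
  exact Finset.card_pos.mpr ⟨c, (SimpleGraph.mem_neighborFinset _ _ _).2 hc⟩

lemma lap_row {G : SimpleGraph (Fin n)} (u : Fin n) (f : Fin n → ℝ) :
    ∑ v, lapG G u v * f v = degG G u * f u - ∑ v ∈ G.neighborFinset u, f v := by
  have : ∀ v, lapG G u v * f v = (if u = v then degG G u * f v else 0) - adjW G u v * f v := by
    intro v
    rw [lapG, Matrix.of_apply, sub_mul]
    congr 1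
    split <;> simp
  rw [Finset.sum_congr rfl fun v _ => this v, Finset.sum_sub_distrib, Finset.sum_ite_eq,
    if_pos (Finset.mem_univ u), adjW_sum_eq]

lemma lap_rowsum_zero {G : SimpleGraph (Fin n)} (u : Fin n) :
    ∑ v, lapG G u v = 0 := by
  have := lap_row (G := G) u (fun _ => (1:ℝ))
  simp only [mul_one] at this
  rw [this, Finset.sum_const, SimpleGraph.card_neighborFinset_eq_degree, degG_eq]
  simp

lemma lap_dist {G : SimpleGraph (Fin n)} (hT : G.IsTree) (u w : Fin n) :
    ∑ v, lapG G u v * (G.dist v w : ℝ) = (if u = w then 0 else 2) - degG G u := by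
  rw [lap_row]
  rcases eq_or_ne u w with h | h
  · subst h
    rw [if_pos rfl, SimpleGraph.dist_self]
    have h1 : ∀ v ∈ G.neighborFinset u, ((G.dist v u : ℝ)) = 1 := by
      intro v hv
      rw [SimpleGraph.mem_neighborFinset] at hv
      rw [SimpleGraph.dist_eq_one_iff_adj.mpr hv.symm]
      norm_num
    rw [Finset.sum_congr rfl h1, Finset.sum_const, SimpleGraph.card_neighborFinset_eq_degree,
      degG_eq]
    simp
  · obtain ⟨c, hc, hc1, hc2⟩ := neighbor_dist hT h
    have hcm : c ∈ G.neighborFinset u := (SimpleGraph.mem_neighborFinset _ _ _).2 hc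
    rw [if_neg h, ← Finset.sum_erase_add _ _ hcm]
    have h2 : ∀ v ∈ (G.neighborFinset u).erase c, ((G.dist v w : ℝ)) = (G.dist u w : ℝ) + 1 := by
      intro v hv
      rw [Finset.mem_erase, SimpleGraph.mem_neighborFinset] at hv
      rw [hc2 v hv.2 hv.1]
      push_cast; ring
    rw [Finset.sum_congr rfl h2, Finset.sum_const, Finset.card_erase_of_mem hcm,
      SimpleGraph.card_neighborFinset_eq_degree]
    have h3 : ((G.dist c w : ℝ)) = (G.dist u w : ℝ) - 1 := by
      have h := congrArg (fun k : ℕ => (k : ℝ)) hc1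
      push_cast at h
      linarith
    have h4 : 1 ≤ G.degree u := by
      rw [← SimpleGraph.card_neighborFinset_eq_degree]
      exact Finset.card_pos.mpr ⟨c, hcm⟩
    have h5 : ((G.degree u - 1 : ℕ) : ℝ) = (G.degree u : ℝ) - 1 := by
      push_cast [h4]; ring
    rw [h3, nsmul_eq_mul, h5, degG_eq]
    ring

lemma lap_s {G : SimpleGraph (Fin n)} (hT : G.IsTree) (u : Fin n) :
    ∑ v, lapG G u v * (∑ x, (G.dist v x : ℝ)) =
      (2 * n - 2) - n * degG G u := by
  have h1 : ∀ v, lapG G u v * (∑ x, (G.dist v x : ℝ)) = ∑ x, lapG G u v * (G.dist v x : ℝ) :=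
    fun v => Finset.mul_sum _ _ _
  rw [Finset.sum_congr rfl fun v _ => h1 v, Finset.sum_comm]
  rw [Finset.sum_congr rfl fun x _ => lap_dist hT u x]
  rw [Finset.sum_sub_distrib, Finset.sum_const]
  have h2 : (∑ x : Fin n, if u = x then (0:ℝ) else 2) = 2 * n - 2 := by
    have : ∀ x : Fin n, (if u = x then (0:ℝ) else 2) = 2 - (if u = x then 2 else 0) := by
      intro x; split <;> ring
    rw [Finset.sum_congr rfl fun x _ => this x, Finset.sum_sub_distrib, Finset.sum_const,
      Finset.sum_ite_eq, if_pos (Finset.mem_univ u)]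
    simp [Finset.card_univ, nsmul_eq_mul]
    ring
  rw [h2]
  simp only [Finset.sum_const, Finset.card_univ, Fintype.card_fin, nsmul_eq_mul]

lemma sum_degG {G : SimpleGraph (Fin n)} (hn : 2 ≤ n) (hT : G.IsTree) :
    ∑ u, degG G u = 2 * (n : ℝ) - 2 := by
  have h1 : ∑ u, G.degree u = 2 * G.edgeFinset.card := SimpleGraph.sum_degrees_eq_twice_card_edges G
  have h2 : G.edgeFinset.card = n - 1 := by
    have := hT.card_edgeFinset
    simp only [Fintype.card_fin] at this
    omega
  have h3 : (∑ u, degG G u) = ((∑ u, G.degree u : ℕ) : ℝ) := by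
    push_cast
    exact Finset.sum_congr rfl fun u _ => degG_eq u
  rw [h3, h1, h2]
  have : 1 ≤ n := by omega
  push_cast [this]
  ring



lemma trace_formula {n : ℕ} (A M : Matrix (Fin n) (Fin n) ℝ) (hA : A.IsHermitian)
    (φ : Fin n → ℝ) (hφ : A *ᵥ φ = 0) (hφ1 : φ ⬝ᵥ φ = 1)
    (hAM : A * M = 1 - Matrix.vecMulVec φ φ) :
    ∑ i, (hA.eigenvalues i)⁻¹ = Matrix.trace (M * (1 - Matrix.vecMulVec φ φ)) := by
  have hAT : Aᵀ = A := by
    ext i j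
    have := congrFun (congrFun hA i) j
    simpa [Matrix.conjTranspose_apply] using this
  have hsym_dot : ∀ x y : Fin n → ℝ, x ⬝ᵥ (A *ᵥ y) = (A *ᵥ x) ⬝ᵥ y := by
    intro x y
    rw [Matrix.dotProduct_mulVec, ← Matrix.mulVec_transpose, hAT]
  set U : Matrix (Fin n) (Fin n) ℝ := (hA.eigenvectorUnitary : Matrix (Fin n) (Fin n) ℝ) with hU
  have hU1 : star U * U = 1 := Matrix.mem_unitaryGroup_iff'.mp (hA.eigenvectorUnitary).2
  have hU2 : U * star U = 1 := Matrix.mem_unitaryGroup_iff.mp (hA.eigenvectorUnitary).2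
  set P : Matrix (Fin n) (Fin n) ℝ := 1 - Matrix.vecMulVec φ φ with hP
  have htr : Matrix.trace (M * P) = Matrix.trace (star U * (M * P) * U) := by
    rw [Matrix.trace_mul_cycle, ← Matrix.mul_assoc, hU2, Matrix.one_mul]
  rw [htr, Matrix.trace]
  refine Finset.sum_congr rfl fun i _ => ?_
  symm
  show (star U * (M * P) * U) i i = _
  set v : Fin n → ℝ := ⇑(hA.eigenvectorBasis i) with hv
  have hUv : ∀ j, U j i = v j := fun j => hA.eigenvectorUnitary_apply j i
  have hAv : A *ᵥ v = hA.eigenvalues i • v := hA.mulVec_eigenvectorBasis i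
  have hvv : v ⬝ᵥ v = 1 := by
    have := congrFun (congrFun hU1 i) i
    simp only [Matrix.mul_apply, Matrix.one_apply_eq, Matrix.star_apply, star_trivial] at this
    rw [dotProduct]
    rw [← this]
    exact Finset.sum_congr rfl fun j _ => by rw [hUv j]
  have key : (star U * (M * P) * U) i i = v ⬝ᵥ ((M * P) *ᵥ v) := by
    rw [Matrix.mul_assoc, Matrix.mul_apply, dotProduct]
    refine Finset.sum_congr rfl fun k _ => ?_
    simp only [Matrix.star_apply, star_trivial, Matrix.mul_apply, Matrix.mulVec,
      dotProduct, hUv]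
  rw [key, ← Matrix.mulVec_mulVec]
  have hPv : P *ᵥ v = v - (φ ⬝ᵥ v) • φ := by
    rw [hP, Matrix.sub_mulVec, Matrix.one_mulVec]
    congr 1
    ext j
    simp only [Matrix.vecMulVec_apply, Matrix.mulVec, dotProduct, Pi.smul_apply,
      smul_eq_mul]
    rw [Finset.sum_mul]
    exact Finset.sum_congr rfl fun k _ => by ring
  by_cases hev : hA.eigenvalues i = 0
  · -- v is a multiple of φ; show P *ᵥ v = 0
    have hAv0 : A *ᵥ v = 0 := by rw [hAv, hev, zero_smul]
    have hAs : ∀ a b, A a b = A b a := fun a b =>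
      show A a b = A b a from (congrFun (congrFun hAT a) b).symm
    have hvA : A.vecMul v = 0 := by
      ext j
      show ∑ k, v k * A k j = 0
      have heq : ∑ k, v k * A k j = ∑ k, A j k * v k :=
        Finset.sum_congr rfl fun k _ => by rw [mul_comm, hAs k j]
      rw [heq]
      exact congrFun hAv0 j
    have hvP : P.vecMul v = 0 := by
      rw [← hAM, ← Matrix.vecMul_vecMul, hvA, Matrix.zero_vecMul]
    have hPsymm : ∀ j k, P j k = P k j := by
      intro j k
      rcases eq_or_ne j k with h | h
      · subst h; rfl
      · simp [hP, Matrix.sub_apply, Matrix.vecMulVec_apply, Matrix.one_apply, h, h.symm, mul_comm]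
    have hPv0 : P *ᵥ v = 0 := by
      ext j
      have h0 := congrFun hvP j
      rw [Matrix.vecMul, dotProduct] at h0
      rw [Pi.zero_apply] at h0
      show (fun k => P j k) ⬝ᵥ v = 0
      rw [dotProduct, ← h0]
      exact Finset.sum_congr rfl fun k _ => by rw [hPsymm j k, mul_comm]
    rw [hPv0, Matrix.mulVec_zero, dotProduct_zero, hev, _root_.inv_zero]
  · have horth : φ ⬝ᵥ v = 0 := by
      have h1 : hA.eigenvalues i * (φ ⬝ᵥ v) = 0 := by
        have : φ ⬝ᵥ (A *ᵥ v) = 0 := by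
          rw [hsym_dot, hφ, zero_dotProduct]
        rw [hAv, dotProduct_smul] at this
        simpa [smul_eq_mul] using this
      exact (mul_eq_zero.mp h1).resolve_left hev
    have hPvv : P *ᵥ v = v := by rw [hPv, horth, zero_smul, sub_zero]
    rw [hPvv]
    have hfin : hA.eigenvalues i * (v ⬝ᵥ (M *ᵥ v)) = 1 := by
      have h2 : (A *ᵥ v) ⬝ᵥ (M *ᵥ v) = hA.eigenvalues i * (v ⬝ᵥ (M *ᵥ v)) := by
        rw [hAv, smul_dotProduct, smul_eq_mul]
      have h3 : (A *ᵥ v) ⬝ᵥ (M *ᵥ v) = v ⬝ᵥ (A *ᵥ (M *ᵥ v)) := (hsym_dot v (M *ᵥ v)).symm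
      rw [Matrix.mulVec_mulVec, hAM] at h3
      rw [← h2, h3, hPvv, hvv]
    field_simp
    linarith [hfin]


lemma lapG_symm {G : SimpleGraph (Fin n)} (u v : Fin n) : lapG G u v = lapG G v u := by
  rcases eq_or_ne u v with rfl | h
  · rfl
  · by_cases a : G.Adj u v
    · have a' : G.Adj v u := a.symm
      simp [lapG, adjW, h, h.symm, a, a']
    · have a' : ¬ G.Adj v u := fun hh => a hh.symm
      simp [lapG, adjW, h, h.symm, a, a']

lemma nlapG_herm {G : SimpleGraph (Fin n)} : (nlapG G).IsHermitian := by
  rw [Matrix.IsHermitian]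
  ext u v
  rw [Matrix.conjTranspose_apply, star_trivial, nlapG, Matrix.of_apply, Matrix.of_apply,
    lapG_symm v u, mul_comm]

lemma kemeny_eq {G : SimpleGraph (Fin n)} (hn : 2 ≤ n) (hT : G.IsTree) :
    sumInvEig (nlapG G) =
      (∑ u, ∑ v, degG G u * degG G v * (G.dist u v : ℝ)) / (2 * (2 * (n:ℝ) - 2)) := by
  have hn' : (2:ℝ) ≤ (n:ℝ) := by exact_mod_cast hn
  have hV : (0:ℝ) < 2 * (n:ℝ) - 2 := by linarith
  have hdpos : ∀ u, 0 < degG G u := fun u => by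
    rw [degG_eq]; exact_mod_cast Nat.lt_of_lt_of_le Nat.zero_lt_one (degree_pos hn hT u)
  have hs : ∀ u, Real.sqrt (degG G u) ≠ 0 := fun u => (Real.sqrt_pos.mpr (hdpos u)).ne'
  have hsq : ∀ u, Real.sqrt (degG G u) * Real.sqrt (degG G u) = degG G u :=
    fun u => Real.mul_self_sqrt (hdpos u).le
  have hsV : Real.sqrt (2 * (n:ℝ) - 2) ≠ 0 := (Real.sqrt_pos.mpr hV).ne'
  have hsqV : Real.sqrt (2 * (n:ℝ) - 2) * Real.sqrt (2 * (n:ℝ) - 2) = 2 * (n:ℝ) - 2 :=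
    Real.mul_self_sqrt hV.le
  set φ : Fin n → ℝ := fun u => Real.sqrt (degG G u) / Real.sqrt (2 * (n:ℝ) - 2) with hφdef
  set M : Matrix (Fin n) (Fin n) ℝ := Matrix.of fun u v =>
    Real.sqrt (degG G u) * Real.sqrt (degG G v) *
      ((∑ x, (G.dist u x : ℝ)) / (2 * (n:ℝ) - 2) - (G.dist u v : ℝ) / 2) with hMdef
  have hφ : nlapG G *ᵥ φ = 0 := by
    ext u
    show (∑ v, nlapG G u v * φ v) = 0
    have h1 : ∀ v, nlapG G u v * φ v =
        lapG G u v * (1 / (Real.sqrt (degG G u) * Real.sqrt (2 * (n:ℝ) - 2))) := by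
      intro v
      rw [nlapG, Matrix.of_apply, hφdef]
      field_simp [hs u, hs v, hsV]
    rw [Finset.sum_congr rfl fun v _ => h1 v, ← Finset.sum_mul, lap_rowsum_zero, zero_mul]
  have hφ1 : φ ⬝ᵥ φ = 1 := by
    show (∑ u, φ u * φ u) = 1
    have h1 : ∀ u, φ u * φ u = degG G u / (2 * (n:ℝ) - 2) := by
      intro u
      rw [hφdef, div_mul_div_comm, hsq u, hsqV]
    rw [Finset.sum_congr rfl fun u _ => h1 u, ← Finset.sum_div, sum_degG hn hT, div_self hV.ne']
  have hAM : nlapG G * M = 1 - Matrix.vecMulVec φ φ := by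
    ext u w
    rw [Matrix.mul_apply]
    have h1 : ∀ v, nlapG G u v * M v w =
        (Real.sqrt (degG G w) / Real.sqrt (degG G u)) *
          ((lapG G u v * (∑ x, (G.dist v x : ℝ))) / (2 * (n:ℝ) - 2)
            - (lapG G u v * (G.dist v w : ℝ)) / 2) := by
      intro v
      rw [nlapG, Matrix.of_apply, hMdef, Matrix.of_apply]
      field_simp [hs u, hs v, hsV]
    rw [Finset.sum_congr rfl fun v _ => h1 v, ← Finset.mul_sum, Finset.sum_sub_distrib,
      ← Finset.sum_div, ← Finset.sum_div, lap_s hT u, lap_dist hT u w]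
    rw [Matrix.sub_apply, Matrix.one_apply, Matrix.vecMulVec_apply, hφdef]
    rcases eq_or_ne u w with rfl | h
    · rw [if_pos rfl, if_pos rfl, div_self (hs u), div_mul_div_comm, hsq u, hsqV]
      field_simp [show (n:ℝ) - 1 ≠ 0 by intro h; linarith]
      ring
    · rw [if_neg h, if_neg h, div_mul_div_comm, hsqV]
      have hbr : ((2 * (n:ℝ) - 2) - (n:ℝ) * degG G u) / (2 * (n:ℝ) - 2)
          - (2 - degG G u) / 2 = -(degG G u) / (2 * (n:ℝ) - 2) := by
        field_simp [show (n:ℝ) - 1 ≠ 0 by intro h; linarith]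
        ring
      rw [hbr, zero_sub, div_mul_div_comm, ← neg_div,
        div_eq_div_iff (mul_ne_zero (hs u) hV.ne') hV.ne']
      linear_combination (Real.sqrt (degG G w) * (2*(n:ℝ)-2)) * hsq u
  rw [sumInvEig, dif_pos nlapG_herm,
    trace_formula (nlapG G) M nlapG_herm φ hφ hφ1 hAM, Matrix.trace]
  have hdiag : ∀ u, (M * (1 - Matrix.vecMulVec φ φ)).diag u =
      (∑ v, degG G u * degG G v * (G.dist u v : ℝ)) / (2 * (2 * (n:ℝ) - 2)) := by
    intro u
    show (∑ v, M u v * ((1 - Matrix.vecMulVec φ φ) v u)) = _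
    have h2 : ∀ v, M u v * ((1 - Matrix.vecMulVec φ φ) v u) =
        (if v = u then M u u else 0) -
          (degG G u * ((∑ x, (G.dist u x : ℝ)) / (2 * (n:ℝ) - 2)) / (2 * (n:ℝ) - 2)) * degG G v
          + (degG G u / (2 * (2 * (n:ℝ) - 2))) * (degG G v * (G.dist u v : ℝ)) := by
      intro v
      rw [Matrix.sub_apply, Matrix.one_apply, Matrix.vecMulVec_apply, hφdef]
      rcases eq_or_ne v u with rfl | h
      · rw [if_pos rfl, if_pos rfl]
        rw [hMdef, Matrix.of_apply, SimpleGraph.dist_self, Nat.cast_zero]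
        rw [div_mul_div_comm, hsq v, hsqV]
        rw [show degG G v = Real.sqrt (degG G v) * Real.sqrt (degG G v) from (hsq v).symm]
        field_simp [show (n:ℝ) - 1 ≠ 0 by intro h; linarith]
        ring
      · rw [if_neg h, if_neg h]
        rw [hMdef, Matrix.of_apply]
        rw [div_mul_div_comm, hsqV]
        rw [show degG G u = Real.sqrt (degG G u) * Real.sqrt (degG G u) from (hsq u).symm,
          show degG G v = Real.sqrt (degG G v) * Real.sqrt (degG G v) from (hsq v).symm]
        field_simp [show (n:ℝ) - 1 ≠ 0 by intro h; linarith]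
        simp only [Real.sqrt_sq (Real.sqrt_nonneg _)]
        ring
    rw [Finset.sum_congr rfl fun v _ => h2 v]
    rw [Finset.sum_add_distrib, Finset.sum_sub_distrib, Finset.sum_ite_eq', if_pos (Finset.mem_univ u)]
    rw [← Finset.mul_sum, sum_degG hn hT, ← Finset.mul_sum]
    have hM : M u u = degG G u * ((∑ x, (G.dist u x : ℝ)) / (2 * (n:ℝ) - 2)) := by
      rw [hMdef, Matrix.of_apply, SimpleGraph.dist_self, Nat.cast_zero, zero_div, sub_zero,
        hsq u]
    have hR : (∑ v, degG G u * degG G v * (G.dist u v : ℝ)) =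
        degG G u * ∑ v, degG G v * (G.dist u v : ℝ) := by
      rw [Finset.mul_sum]; exact Finset.sum_congr rfl fun v _ => by ring
    rw [hM, hR]
    field_simp [show (n:ℝ) - 1 ≠ 0 by intro h; linarith]
    ring
  rw [Finset.sum_congr rfl fun u _ => hdiag u, ← Finset.sum_div]



lemma star_adj (hn : 2 ≤ n) (u v : Fin n) :
    (_root_.starGraph n).Adj u v ↔ u ≠ v ∧ (u = ⟨0, by omega⟩ ∨ v = ⟨0, by omega⟩) := by
  rw [_root_.starGraph, SimpleGraph.fromRel_adj]
  constructor
  · rintro ⟨h1, h2 | h2⟩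
    · exact ⟨h1, Or.inl (Fin.ext h2)⟩
    · exact ⟨h1, Or.inr (Fin.ext h2)⟩
  · rintro ⟨h1, h2 | h2⟩
    · exact ⟨h1, Or.inl (by rw [h2])⟩
    · exact ⟨h1, Or.inr (by rw [h2])⟩

lemma star_adj_z (hn : 2 ≤ n) {u : Fin n} (hu : u ≠ ⟨0, by omega⟩) :
    (_root_.starGraph n).Adj u ⟨0, by omega⟩ :=
  (star_adj hn u _).2 ⟨hu, Or.inr rfl⟩

lemma star_connected (hn : 2 ≤ n) : (_root_.starGraph n).Connected := by
  rw [SimpleGraph.connected_iff]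
  refine ⟨fun u v => ?_, ⟨⟨0, by omega⟩⟩⟩
  have h1 : ∀ w : Fin n, (_root_.starGraph n).Reachable w ⟨0, by omega⟩ := by
    intro w
    rcases eq_or_ne w ⟨0, by omega⟩ with rfl | h
    · exact SimpleGraph.Reachable.refl _
    · exact (star_adj_z hn h).reachable
  exact (h1 u).trans (h1 v).symm

lemma star_path_len (hn : 2 ≤ n) {w : Fin n} (p : (_root_.starGraph n).Walk ⟨0, by omega⟩ w)
    (hp : p.IsPath) : p.length ≤ 1 := by
  cases p with
  | nil => simp
  | cons h r =>
      rename_i x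
      cases r with
      | nil => simp
      | cons h2 r2 =>
          rename_i y
          exfalso
          have hx : x ≠ ⟨0, by omega⟩ := Ne.symm h.ne
          have hy : y = ⟨0, by omega⟩ := by
            rcases (star_adj hn x y).1 h2 with ⟨-, h3 | h3⟩
            · exact absurd h3 hx
            · exact h3
          rw [SimpleGraph.Walk.cons_isPath_iff] at hp
          apply hp.2
          rw [SimpleGraph.Walk.support_cons]
          refine List.mem_cons_of_mem _ ?_
          rw [← hy]
          exact SimpleGraph.Walk.start_mem_support r2

lemma star_path_unique_z (hn : 2 ≤ n) {w : Fin n} (p q : (_root_.starGraph n).Walk ⟨0, by omega⟩ w)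
    (hp : p.IsPath) (hq : q.IsPath) : p = q := by
  rcases eq_or_ne w ⟨0, by omega⟩ with rfl | hw
  · rw [(SimpleGraph.Walk.isPath_iff_eq_nil (p := p)).1 hp, (SimpleGraph.Walk.isPath_iff_eq_nil (p := q)).1 hq]
  · have key : ∀ r : (_root_.starGraph n).Walk ⟨0, by omega⟩ w, r.IsPath →
        ∃ h : (_root_.starGraph n).Adj ⟨0, by omega⟩ w, r = SimpleGraph.Walk.cons h SimpleGraph.Walk.nil := by
      intro r hr
      cases r with
      | nil => exact absurd rfl (Ne.symm hw)
      | cons h s =>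
          cases s with
          | nil => exact ⟨h, rfl⟩
          | cons h2 s2 =>
              exfalso
              have := star_path_len hn _ hr
              simp [SimpleGraph.Walk.length_cons] at this
    obtain ⟨h1, e1⟩ := key p hp
    obtain ⟨h2, e2⟩ := key q hq
    rw [e1, e2]

lemma star_acyclic (hn : 2 ≤ n) : (_root_.starGraph n).IsAcyclic := by
  apply SimpleGraph.isAcyclic_of_path_unique
  intro v w p q
  have hz : (⟨0, by omega⟩ : Fin n) = ⟨0, by omega⟩ := rfl
  rcases eq_or_ne v (⟨0, by omega⟩ : Fin n) with rfl | hv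
  · exact Subtype.ext (star_path_unique_z hn p.val q.val p.prop q.prop)
  · rcases eq_or_ne w (⟨0, by omega⟩ : Fin n) with rfl | hw
    · have := star_path_unique_z hn p.val.reverse q.val.reverse p.prop.reverse q.prop.reverse
      have h2 := congrArg SimpleGraph.Walk.reverse this
      rw [SimpleGraph.Walk.reverse_reverse, SimpleGraph.Walk.reverse_reverse] at h2
      exact Subtype.ext h2
    · rcases eq_or_ne v w with rfl | hvw
      · exact Subtype.ext (by rw [(SimpleGraph.Walk.isPath_iff_eq_nil (p := p.val)).1 p.prop,
          (SimpleGraph.Walk.isPath_iff_eq_nil (p := q.val)).1 q.prop])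
      · -- both are the two-step path through the center
        have key : ∀ r : (_root_.starGraph n).Walk v w, r.IsPath →
            ∃ (h1 : (_root_.starGraph n).Adj v ⟨0, by omega⟩)
              (h2 : (_root_.starGraph n).Adj (⟨0, by omega⟩ : Fin n) w),
              r = SimpleGraph.Walk.cons h1 (SimpleGraph.Walk.cons h2 SimpleGraph.Walk.nil) := by
          intro r hr
          cases r with
          | nil => exact absurd rfl hvw
          | cons h s =>
              rename_i x
              have hx : x = ⟨0, by omega⟩ := by
                rcases (star_adj hn v x).1 h with ⟨-, h3 | h3⟩
                · exact absurd h3 hv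
                · exact h3
              subst hx
              have hsp : s.IsPath := hr.of_cons
              obtain ⟨h2, e2⟩ := by
                have hw' : w ≠ (⟨0, by omega⟩ : Fin n) := hw
                -- reuse the z-decomposition
                exact (by
                  cases s with
                  | nil => exact absurd rfl (Ne.symm hw')
                  | cons h2 s2 =>
                      cases s2 with
                      | nil => exact ⟨h2, rfl⟩
                      | cons h3 s3 =>
                          exfalso
                          have := star_path_len hn _ hsp
                          simp [SimpleGraph.Walk.length_cons] at this :
                  ∃ h : (_root_.starGraph n).Adj ⟨0, by omega⟩ w,
                    s = SimpleGraph.Walk.cons h SimpleGraph.Walk.nil)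
              exact ⟨h, h2, by rw [e2]⟩
        obtain ⟨a1, a2, e1⟩ := key p.val p.prop
        obtain ⟨b1, b2, e2⟩ := key q.val q.prop
        exact Subtype.ext (by rw [e1, e2])

lemma star_isTree (hn : 2 ≤ n) : (_root_.starGraph n).IsTree :=
  ⟨star_connected hn, star_acyclic hn⟩

lemma star_dist_le_two (hn : 2 ≤ n) (u v : Fin n) : (_root_.starGraph n).dist u v ≤ 2 := by
  rcases eq_or_ne u v with rfl | huv
  · simp [SimpleGraph.dist_self]
  · rcases eq_or_ne u (⟨0, by omega⟩ : Fin n) with rfl | hu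
    · have h : (_root_.starGraph n).Adj ⟨0, by omega⟩ v := (star_adj hn _ _).2 ⟨huv, Or.inl rfl⟩
      have h2 := SimpleGraph.dist_le h.toWalk
      simp only [SimpleGraph.Adj.toWalk, SimpleGraph.Walk.length_cons,
        SimpleGraph.Walk.length_nil] at h2
      omega
    · rcases eq_or_ne v (⟨0, by omega⟩ : Fin n) with rfl | hv
      · have h2 := SimpleGraph.dist_le (star_adj_z hn hu).toWalk
        simp only [SimpleGraph.Adj.toWalk, SimpleGraph.Walk.length_cons,
          SimpleGraph.Walk.length_nil] at h2
        omega
      · have h1 : (_root_.starGraph n).Adj u ⟨0, by omega⟩ := star_adj_z hn hu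
        have h2 : (_root_.starGraph n).Adj (⟨0, by omega⟩ : Fin n) v := ((star_adj_z hn hv).symm)
        have h3 := SimpleGraph.dist_le
          (SimpleGraph.Walk.cons h1 (SimpleGraph.Walk.cons h2 SimpleGraph.Walk.nil))
        simp only [SimpleGraph.Walk.length_cons, SimpleGraph.Walk.length_nil] at h3
        omega



/-- Two paths with the same endpoints in a tree are equal. -/
lemma walk_eq_of_isPath {V : Type*} {G : SimpleGraph V} (hT : G.IsTree) {u v : V}
    {p q : G.Walk u v} (hp : p.IsPath) (hq : q.IsPath) : p = q := by
  have := hT.IsAcyclic.path_unique ⟨p, hp⟩ ⟨q, hq⟩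
  exact congrArg Subtype.val this

lemma no_triangle {V : Type*} {G : SimpleGraph V} (hT : G.IsTree) {x y m : V}
    (h1 : G.Adj x y) (h2 : G.Adj y m) (h3 : G.Adj m x) : False := by
  have hp1 : (SimpleGraph.Walk.cons h1 SimpleGraph.Walk.nil).IsPath :=
    SimpleGraph.Path.singleton h1 |>.prop
  have hp2 : (SimpleGraph.Walk.cons h3.symm (SimpleGraph.Walk.cons h2.symm
      SimpleGraph.Walk.nil)).IsPath := by
    rw [SimpleGraph.Walk.cons_isPath_iff]
    refine ⟨(SimpleGraph.Path.singleton h2.symm).prop, ?_⟩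
    simp [h3.ne', h1.ne]
  have := walk_eq_of_isPath hT hp1 hp2
  have hl := congrArg SimpleGraph.Walk.length this
  simp at hl

lemma common_unique {V : Type*} {G : SimpleGraph V} (hT : G.IsTree) {x y m m' : V}
    (hxy : x ≠ y) (h1 : G.Adj x m) (h2 : G.Adj m y) (h1' : G.Adj x m') (h2' : G.Adj m' y) :
    m = m' := by
  have hp1 : (SimpleGraph.Walk.cons h1 (SimpleGraph.Walk.cons h2 SimpleGraph.Walk.nil)).IsPath := by
    rw [SimpleGraph.Walk.cons_isPath_iff]
    refine ⟨(SimpleGraph.Path.singleton h2).prop, ?_⟩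
    simp [h1.ne, hxy]
  have hp2 : (SimpleGraph.Walk.cons h1' (SimpleGraph.Walk.cons h2' SimpleGraph.Walk.nil)).IsPath := by
    rw [SimpleGraph.Walk.cons_isPath_iff]
    refine ⟨(SimpleGraph.Path.singleton h2').prop, ?_⟩
    simp [h1'.ne, hxy]
  have := walk_eq_of_isPath hT hp1 hp2
  have hv := congrArg (fun w => SimpleGraph.Walk.getVert w 1) this
  simpa using hv

/-- In a tree, a pair of adjacent-to-both vertices exists iff distance is 2. -/
lemma exists_common_iff_dist_two {G : SimpleGraph (Fin n)} (hT : G.IsTree) {x y : Fin n}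
    (hxy : x ≠ y) : (∃ m, G.Adj x m ∧ G.Adj m y) ↔ G.dist x y = 2 := by
  constructor
  · rintro ⟨m, hm1, hm2⟩
    have hle : G.dist x y ≤ 2 := by
      have := SimpleGraph.dist_le (SimpleGraph.Walk.cons hm1 (SimpleGraph.Walk.cons hm2
        SimpleGraph.Walk.nil))
      simpa using this
    have h0 : G.dist x y ≠ 0 := (hT.isConnected.pos_dist_of_ne hxy).ne'
    have h1 : G.dist x y ≠ 1 := by
      intro h
      exact no_triangle hT (SimpleGraph.dist_eq_one_iff_adj.1 h) hm2.symm hm1.symm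
    omega
  · intro h
    obtain ⟨q, hq⟩ := (hT.isConnected x y).exists_walk_length_eq_dist
    rw [h] at hq
    cases q with
    | nil => simp at hq
    | cons h1 r =>
        cases r with
        | nil => simp at hq
        | cons h2 r2 =>
            cases r2 with
            | nil => exact ⟨_, h1, h2⟩
            | cons h3 r3 => simp [SimpleGraph.Walk.length_cons] at hq

lemma W2_eq {G : SimpleGraph (Fin n)} (hT : G.IsTree) (x y : Fin n) :
    (∑ u, adjW G x u * adjW G u y) =
      (if x = y then degG G x else 0) + (if G.dist x y = 2 then 1 else 0) := by
  have hterm : ∀ u, adjW G x u * adjW G u y =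
      if (G.Adj x u ∧ G.Adj u y) then (1:ℝ) else 0 := by
    intro u
    by_cases h1 : G.Adj x u <;> by_cases h2 : G.Adj u y <;> simp [adjW, h1, h2]
  rw [Finset.sum_congr rfl fun u _ => hterm u, Finset.sum_boole]
  rcases eq_or_ne x y with rfl | hxy
  · rw [if_pos rfl, if_neg (by rw [SimpleGraph.dist_self]; omega)]
    have : Finset.univ.filter (fun u => G.Adj x u ∧ G.Adj u x) =
        Finset.univ.filter (G.Adj x) := by
      ext u
      simp only [Finset.mem_filter, Finset.mem_univ, true_and]
      exact ⟨fun h => h.1, fun h => ⟨h, h.symm⟩⟩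
    rw [this, ← neighborFinset_eq, SimpleGraph.card_neighborFinset_eq_degree, degG_eq, add_zero]
  · rw [if_neg hxy, zero_add]
    by_cases hd : G.dist x y = 2
    · rw [if_pos hd]
      obtain ⟨m, hm1, hm2⟩ := (exists_common_iff_dist_two hT hxy).2 hd
      have : Finset.univ.filter (fun u => G.Adj x u ∧ G.Adj u y) = {m} := by
        ext u
        simp only [Finset.mem_filter, Finset.mem_univ, true_and, Finset.mem_singleton]
        exact ⟨fun h => common_unique hT hxy h.1 h.2 hm1 hm2, fun h => h ▸ ⟨hm1, hm2⟩⟩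
      rw [this]
      simp
    · rw [if_neg hd]
      have : Finset.univ.filter (fun u => G.Adj x u ∧ G.Adj u y) = ∅ := by
        ext u
        simp only [Finset.mem_filter, Finset.mem_univ, true_and, Finset.notMem_empty,
          iff_false]
        intro h
        exact hd ((exists_common_iff_dist_two hT hxy).1 ⟨u, h.1, h.2⟩)
      rw [this]
      simp

lemma sum_sq_degG {G : SimpleGraph (Fin n)} (hn : 2 ≤ n) (hT : G.IsTree) :
    ∑ u, degG G u * degG G u =
      (2 * (n:ℝ) - 2) + ∑ x, ∑ y, (if G.dist x y = 2 then (1:ℝ) else 0) := by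
  have h1 : ∀ u, degG G u * degG G u = ∑ x, ∑ y, adjW G u x * adjW G u y := by
    intro u
    rw [degG, Finset.sum_mul_sum]
  rw [Finset.sum_congr rfl fun u _ => h1 u]
  rw [Finset.sum_comm]
  have h2 : ∀ x, (∑ u, ∑ y, adjW G u x * adjW G u y) = ∑ y, ∑ u, adjW G u x * adjW G u y :=
    fun x => Finset.sum_comm
  rw [Finset.sum_congr rfl fun x _ => h2 x]
  have h3 : ∀ x y, (∑ u, adjW G u x * adjW G u y) = ∑ u, adjW G x u * adjW G u y := by
    intro x y
    refine Finset.sum_congr rfl fun u _ => ?_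
    have : adjW G u x = adjW G x u := by
      by_cases h : G.Adj u x
      · simp [adjW, h, h.symm]
      · have h' : ¬ G.Adj x u := fun hh => h hh.symm
        simp [adjW, h, h']
    rw [this]
  rw [Finset.sum_congr rfl fun x _ => Finset.sum_congr rfl fun y _ => h3 x y]
  rw [Finset.sum_congr rfl fun x _ => Finset.sum_congr rfl fun y _ => W2_eq hT x y]
  rw [Finset.sum_congr rfl fun x _ => Finset.sum_add_distrib]
  rw [Finset.sum_add_distrib]
  congr 1
  have h4 : ∀ x : Fin n, (∑ y, if x = y then degG G x else 0) = degG G x := by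
    intro x
    rw [Finset.sum_ite_eq, if_pos (Finset.mem_univ x)]
  rw [Finset.sum_congr rfl fun x _ => h4 x, sum_degG hn hT]



lemma adjW_comm {G : SimpleGraph (Fin n)} (u v : Fin n) : adjW G u v = adjW G v u := by
  by_cases h : G.Adj u v
  · simp [adjW, h, h.symm]
  · have h' : ¬ G.Adj v u := fun hh => h hh.symm
    simp [adjW, h, h']

lemma mk_path3 {G : SimpleGraph (Fin n)} {s x y t : Fin n}
    (h1 : G.Adj s x) (h2 : G.Adj x y) (h3 : G.Adj y t)
    (hys : y ≠ s) (hxt : x ≠ t) (hst : s ≠ t) :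
    (SimpleGraph.Walk.cons h1 (SimpleGraph.Walk.cons h2 (SimpleGraph.Walk.cons h3
      SimpleGraph.Walk.nil))).IsPath := by
  rw [SimpleGraph.Walk.cons_isPath_iff]
  constructor
  · rw [SimpleGraph.Walk.cons_isPath_iff]
    refine ⟨(SimpleGraph.Path.singleton h3).prop, ?_⟩
    simp [h2.ne, hxt]
  · simp [h1.ne, Ne.symm hys, hst]

lemma dist3_decomp {G : SimpleGraph (Fin n)} (hT : G.IsTree) {s t : Fin n}
    (hd : G.dist s t = 3) : ∃ a b, G.Adj s a ∧ G.Adj a b ∧ G.Adj b t := by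
  obtain ⟨q, hq⟩ := (hT.isConnected s t).exists_walk_length_eq_dist
  rw [hd] at hq
  cases q with
  | nil => simp at hq
  | cons h1 r =>
      cases r with
      | nil => simp at hq
      | cons h2 r2 =>
          cases r2 with
          | nil => simp at hq
          | cons h3 r3 =>
              cases r3 with
              | nil => exact ⟨_, _, h1, h2, h3⟩
              | cons h4 r4 => simp [SimpleGraph.Walk.length_cons] at hq

lemma W3_eq {G : SimpleGraph (Fin n)} (hT : G.IsTree) (s t : Fin n) :
    (∑ x, ∑ y, adjW G s x * adjW G x y * adjW G y t) =
      (if G.dist s t = 3 then 1 else 0) +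
      (if G.Adj s t then degG G s + degG G t - 1 else 0) := by
  have hterm : ∀ x y : Fin n, adjW G s x * adjW G x y * adjW G y t =
      if (G.Adj s x ∧ G.Adj x y ∧ G.Adj y t) then (1:ℝ) else 0 := by
    intro x y
    by_cases a1 : G.Adj s x <;> by_cases a2 : G.Adj x y <;> by_cases a3 : G.Adj y t <;>
      simp [adjW, a1, a2, a3]
  rw [Finset.sum_congr rfl fun x _ => Finset.sum_congr rfl fun y _ => hterm x y]
  rw [← Fintype.sum_prod_type (f := fun p : Fin n × Fin n =>
    if (G.Adj s p.1 ∧ G.Adj p.1 p.2 ∧ G.Adj p.2 t) then (1:ℝ) else 0)]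
  rw [Finset.sum_boole]
  set P := Finset.univ.filter
    (fun p : Fin n × Fin n => G.Adj s p.1 ∧ G.Adj p.1 p.2 ∧ G.Adj p.2 t) with hP
  by_cases hst : G.Adj s t
  · have hd1 : G.dist s t = 1 := SimpleGraph.dist_eq_one_iff_adj.2 hst
    rw [if_neg (by omega), if_pos hst, zero_add]
    have hP1P2 : P = (G.neighborFinset s).image (fun x => (x, s)) ∪
        ((G.neighborFinset t).erase s).image (fun y => (t, y)) := by
      ext ⟨x, y⟩
      simp only [hP, Finset.mem_filter, Finset.mem_univ, true_and, Finset.mem_union,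
        Finset.mem_image, Finset.mem_erase, SimpleGraph.mem_neighborFinset, Prod.mk.injEq]
      constructor
      · rintro ⟨a1, a2, a3⟩
        rcases eq_or_ne y s with rfl | hys
        · exact Or.inl ⟨x, a1, rfl, rfl⟩
        · rcases eq_or_ne x t with rfl | hxt
          · exact Or.inr ⟨y, ⟨hys, a2⟩, rfl, rfl⟩
          · exact absurd (walk_eq_of_isPath hT
              (SimpleGraph.Path.singleton hst).prop (mk_path3 a1 a2 a3 hys hxt hst.ne))
              (by intro hh; have := congrArg SimpleGraph.Walk.length hh; simp at this)
      · rintro (⟨x', hx', rfl, rfl⟩ | ⟨y', ⟨hy's, hy'⟩, rfl, rfl⟩)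
        · exact ⟨hx', hx'.symm, hst⟩
        · exact ⟨hst, hy', hy'.symm⟩
    have hdisj : Disjoint ((G.neighborFinset s).image (fun x => (x, s)))
        (((G.neighborFinset t).erase s).image (fun y => (t, y))) := by
      rw [Finset.disjoint_left]
      rintro ⟨a, b⟩ h1 h2
      simp only [Finset.mem_image, Finset.mem_erase, SimpleGraph.mem_neighborFinset,
        Prod.mk.injEq] at h1 h2
      obtain ⟨x', -, -, rfl⟩ := h1
      obtain ⟨y', ⟨hy's, -⟩, -, rfl⟩ := h2
      exact hy's rfl
    have hinj1 : Function.Injective (fun x : Fin n => (x, s)) := fun a b h => by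
      simpa using congrArg Prod.fst h
    have hinj2 : Function.Injective (fun y : Fin n => (t, y)) := fun a b h => by
      simpa using congrArg Prod.snd h
    have hsmem : s ∈ G.neighborFinset t := (SimpleGraph.mem_neighborFinset _ _ _).2 hst.symm
    have hdt : 1 ≤ G.degree t := by
      rw [← SimpleGraph.card_neighborFinset_eq_degree]
      exact Finset.card_pos.mpr ⟨s, hsmem⟩
    rw [hP1P2, Finset.card_union_of_disjoint hdisj,
      Finset.card_image_of_injective _ hinj1, Finset.card_image_of_injective _ hinj2,
      Finset.card_erase_of_mem hsmem,
      SimpleGraph.card_neighborFinset_eq_degree, SimpleGraph.card_neighborFinset_eq_degree]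
    rw [degG_eq, degG_eq]
    push_cast [hdt]
    ring
  · rw [if_neg hst, add_zero]
    by_cases hd3 : G.dist s t = 3
    · rw [if_pos hd3]
      have hne : s ≠ t := by
        intro h
        rw [h, SimpleGraph.dist_self] at hd3
        omega
      obtain ⟨a, b, ha1, ha2, ha3⟩ := dist3_decomp hT hd3
      have hbs : b ≠ s := fun h => hst (h ▸ ha3)
      have hat : a ≠ t := fun h => hst (h ▸ ha1)
      have hmem : ∀ x y, (G.Adj s x ∧ G.Adj x y ∧ G.Adj y t) → (x, y) = (a, b) := by
        rintro x y ⟨b1, b2, b3⟩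
        have hys : y ≠ s := fun h => hst (h ▸ b3)
        have hxt : x ≠ t := fun h => hst (h ▸ b1)
        have p1 := mk_path3 b1 b2 b3 hys hxt hne
        have p2 := mk_path3 ha1 ha2 ha3 hbs hat hne
        have heq := walk_eq_of_isPath hT p1 p2
        have e1 := congrArg (fun w => SimpleGraph.Walk.getVert w 1) heq
        have e2 := congrArg (fun w => SimpleGraph.Walk.getVert w 2) heq
        simp only [SimpleGraph.Walk.getVert_cons_succ, SimpleGraph.Walk.getVert_zero] at e1 e2
        exact Prod.ext e1 e2
      have hPs : P = {(a, b)} := by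
        ext ⟨x, y⟩
        simp only [hP, Finset.mem_filter, Finset.mem_univ, true_and, Finset.mem_singleton]
        constructor
        · intro h
          exact hmem x y h
        · rintro h
          rw [Prod.mk.injEq] at h
          obtain ⟨rfl, rfl⟩ := h
          exact ⟨ha1, ha2, ha3⟩
      rw [hPs]
      simp
    · rw [if_neg hd3]
      have hPe : P = ∅ := by
        ext ⟨x, y⟩
        simp only [hP, Finset.mem_filter, Finset.mem_univ, true_and, Finset.notMem_empty,
          iff_false, not_and]
        intro b1 b2 b3
        rcases eq_or_ne s t with rfl | hne
        · exact no_triangle hT b1 b2 b3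
        · have hys : y ≠ s := fun h => hst (h ▸ b3)
          have hxt : x ≠ t := fun h => hst (h ▸ b1)
          have hp := mk_path3 b1 b2 b3 hys hxt hne
          have hlen := path_length_eq_dist hT _ hp
          simp only [SimpleGraph.Walk.length_cons, SimpleGraph.Walk.length_nil] at hlen
          exact hd3 hlen.symm
      rw [hPe]
      simp



lemma sum_dd_adj {G : SimpleGraph (Fin n)} (hn : 2 ≤ n) (hT : G.IsTree) :
    ∑ x, ∑ y, degG G x * degG G y * adjW G x y =
      (∑ s, ∑ t, if G.dist s t = 3 then (1:ℝ) else 0) +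
        2 * (∑ u, degG G u * degG G u) - (2*(n:ℝ)-2) := by
  have key : ∀ x y : Fin n, degG G x * degG G y * adjW G x y =
      ∑ s, ∑ t, adjW G s x * adjW G x y * adjW G y t := by
    intro x y
    have hxy : degG G x * degG G y * adjW G x y
        = (∑ s, adjW G s x) * ((∑ t, adjW G y t) * adjW G x y) := by
      rw [degG, degG, Finset.sum_congr rfl fun s (_ : s ∈ Finset.univ) => adjW_comm (G := G) x s]
      ring
    rw [hxy, Finset.sum_mul]
    refine Finset.sum_congr rfl fun s _ => ?_
    rw [Finset.sum_mul, Finset.mul_sum]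
    exact Finset.sum_congr rfl fun t _ => by ring
  rw [Finset.sum_congr rfl fun x _ => Finset.sum_congr rfl fun y _ => key x y]
  have swap1 : (∑ x, ∑ y, ∑ s, ∑ t, adjW G s x * adjW G x y * adjW G y t : ℝ) =
      ∑ s, ∑ t, ∑ x, ∑ y, adjW G s x * adjW G x y * adjW G y t := by
    rw [Finset.sum_congr rfl fun x (_ : x ∈ Finset.univ) => Finset.sum_comm]
    rw [Finset.sum_comm]
    rw [Finset.sum_congr rfl fun s (_ : s ∈ Finset.univ) =>
      Finset.sum_congr rfl fun x (_ : x ∈ Finset.univ) => Finset.sum_comm]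
    rw [Finset.sum_congr rfl fun s (_ : s ∈ Finset.univ) => Finset.sum_comm]
  rw [swap1]
  rw [Finset.sum_congr rfl fun s _ => Finset.sum_congr rfl fun t _ => W3_eq hT s t]
  rw [Finset.sum_congr rfl fun s (_ : s ∈ Finset.univ) => Finset.sum_add_distrib,
    Finset.sum_add_distrib]
  have last : (∑ s, ∑ t, if G.Adj s t then degG G s + degG G t - 1 else 0 : ℝ) =
      2 * (∑ u, degG G u * degG G u) - (2*(n:ℝ)-2) := by
    have hterm : ∀ s t : Fin n, (if G.Adj s t then degG G s + degG G t - 1 else (0:ℝ)) =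
        adjW G s t * degG G s + adjW G s t * degG G t - adjW G s t := by
      intro s t
      by_cases h : G.Adj s t <;> simp [adjW, h] <;> ring
    rw [Finset.sum_congr rfl fun s _ => Finset.sum_congr rfl fun t _ => hterm s t]
    rw [Finset.sum_congr rfl fun s (_ : s ∈ Finset.univ) => Finset.sum_sub_distrib _ _,
      Finset.sum_sub_distrib]
    rw [Finset.sum_congr rfl fun s (_ : s ∈ Finset.univ) => Finset.sum_add_distrib,
      Finset.sum_add_distrib]
    have h1 : (∑ s, ∑ t, adjW G s t * degG G s : ℝ) = ∑ u, degG G u * degG G u := by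
      refine Finset.sum_congr rfl fun s _ => ?_
      rw [← Finset.sum_mul]
      rw [show (∑ t, adjW G s t) = degG G s from rfl]
    have h2 : (∑ s, ∑ t, adjW G s t * degG G t : ℝ) = ∑ u, degG G u * degG G u := by
      rw [Finset.sum_comm]
      refine Finset.sum_congr rfl fun t _ => ?_
      rw [← Finset.sum_mul]
      rw [Finset.sum_congr rfl fun s (_ : s ∈ Finset.univ) => adjW_comm (G := G) s t]
      rw [show (∑ s, adjW G t s) = degG G t from rfl]
    have h3 : (∑ s, ∑ t, adjW G s t : ℝ) = 2*(n:ℝ)-2 := by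
      have hd : ∀ s : Fin n, (∑ t, adjW G s t) = degG G s := fun s => rfl
      rw [Finset.sum_congr rfl fun s (_ : s ∈ Finset.univ) => hd s]
      exact sum_degG hn hT
    rw [h1, h2, h3]
    ring
  rw [last]
  ring



lemma sigma_bound {G : SimpleGraph (Fin n)} (hn : 2 ≤ n) (hT : G.IsTree) :
    2*((n:ℝ)-1)*(2*(n:ℝ)-3) ≤ (∑ u, ∑ v, degG G u * degG G v * (G.dist u v : ℝ)) ∧
    ((∑ u, ∑ v, degG G u * degG G v * (G.dist u v : ℝ)) = 2*((n:ℝ)-1)*(2*(n:ℝ)-3) ↔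
      ∀ u v, G.dist u v ≤ 2) := by
  have hdpos : ∀ u, 0 < degG G u := fun u => by
    rw [degG_eq]
    exact_mod_cast Nat.lt_of_lt_of_le Nat.zero_lt_one (degree_pos hn hT u)
  set g : Fin n → Fin n → ℝ := fun u v =>
    degG G u * degG G v * ((2:ℝ) - adjW G u v - (if u = v then 2 else 0)) with hg
  -- pointwise comparison
  have hpt : ∀ u v, g u v ≤ degG G u * degG G v * (G.dist u v : ℝ) := by
    intro u v
    rcases eq_or_ne u v with rfl | huv
    · simp [hg, adjW, SimpleGraph.dist_self]
    · simp only [hg]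
      by_cases ha : G.Adj u v
      · rw [show adjW G u v = 1 from if_pos ha, if_neg huv,
          SimpleGraph.dist_eq_one_iff_adj.2 ha]
        norm_num
      · rw [show adjW G u v = 0 from if_neg ha, if_neg huv]
        have hd2 : 2 ≤ G.dist u v := by
          have h0 : G.dist u v ≠ 0 := (hT.isConnected.pos_dist_of_ne huv).ne'
          have h1 : G.dist u v ≠ 1 := fun h => ha (SimpleGraph.dist_eq_one_iff_adj.1 h)
          omega
        have : (2:ℝ) ≤ (G.dist u v : ℝ) := by exact_mod_cast hd2
        nlinarith [mul_pos (hdpos u) (hdpos v)]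
  have hpt_eq : ∀ u v, G.dist u v ≤ 2 → g u v = degG G u * degG G v * (G.dist u v : ℝ) := by
    intro u v hle
    rcases eq_or_ne u v with rfl | huv
    · simp [hg, adjW, SimpleGraph.dist_self]
    · simp only [hg]
      by_cases ha : G.Adj u v
      · rw [show adjW G u v = 1 from if_pos ha, if_neg huv,
          SimpleGraph.dist_eq_one_iff_adj.2 ha]
        norm_num
      · rw [show adjW G u v = 0 from if_neg ha, if_neg huv]
        have h0 : G.dist u v ≠ 0 := (hT.isConnected.pos_dist_of_ne huv).ne'
        have h1 : G.dist u v ≠ 1 := fun h => ha (SimpleGraph.dist_eq_one_iff_adj.1 h)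
        have : G.dist u v = 2 := by omega
        rw [this]
        norm_num
  have hpt_eq_rev : ∀ u v, g u v = degG G u * degG G v * (G.dist u v : ℝ) →
      G.dist u v ≤ 2 := by
    intro u v h
    rcases eq_or_ne u v with rfl | huv
    · rw [SimpleGraph.dist_self]; omega
    · by_cases ha : G.Adj u v
      · rw [SimpleGraph.dist_eq_one_iff_adj.2 ha]; omega
      · simp only [hg] at h
        rw [show adjW G u v = 0 from if_neg ha, if_neg huv] at h
        have hdd : 0 < degG G u * degG G v := mul_pos (hdpos u) (hdpos v)
        have : (G.dist u v : ℝ) = 2 := by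
          have := mul_left_cancel₀ hdd.ne' (by linarith [h] : degG G u * degG G v * (2:ℝ)
            = degG G u * degG G v * (G.dist u v : ℝ))
          linarith [this]
        have : G.dist u v = 2 := by exact_mod_cast this
        omega
  -- expand the sum of g
  set S2 : ℝ := ∑ u, degG G u * degG G u with hS2def
  set N2 : ℝ := ∑ x, ∑ y, (if G.dist x y = 2 then (1:ℝ) else 0) with hN2def
  set N3 : ℝ := ∑ x, ∑ y, (if G.dist x y = 3 then (1:ℝ) else 0) with hN3def
  have hsum_g : (∑ u, ∑ v, g u v) =
      2*(2*(n:ℝ)-2)*(2*(n:ℝ)-2) - (N3 + 2*S2 - (2*(n:ℝ)-2)) - 2*S2 := by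
    have hterm : ∀ u v : Fin n, g u v = 2*(degG G u * degG G v)
        - degG G u * degG G v * adjW G u v
        - (if u = v then 2 * (degG G u * degG G v) else 0) := by
      intro u v
      simp only [hg]
      rcases eq_or_ne u v with rfl | h
      · rw [if_pos rfl, if_pos rfl]; ring
      · rw [if_neg h, if_neg h]; ring
    rw [Finset.sum_congr rfl fun u _ => Finset.sum_congr rfl fun v _ => hterm u v]
    rw [Finset.sum_congr rfl fun u (_ : u ∈ Finset.univ) => Finset.sum_sub_distrib _ _,
      Finset.sum_sub_distrib]
    rw [Finset.sum_congr rfl fun u (_ : u ∈ Finset.univ) => Finset.sum_sub_distrib _ _,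
      Finset.sum_sub_distrib]
    have e1 : (∑ u, ∑ v, 2*(degG G u * degG G v) : ℝ) = 2*(2*(n:ℝ)-2)*(2*(n:ℝ)-2) := by
      have : ∀ u : Fin n, (∑ v, 2*(degG G u * degG G v) : ℝ) =
          2 * degG G u * (∑ v, degG G v) := by
        intro u
        rw [Finset.mul_sum]
        exact Finset.sum_congr rfl fun v _ => by ring
      rw [Finset.sum_congr rfl fun u _ => this u, sum_degG hn hT, ← Finset.sum_mul]
      have h2 : (∑ u, 2 * degG G u : ℝ) = 2*(2*(n:ℝ)-2) := by
        rw [← Finset.mul_sum, sum_degG hn hT]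
      rw [h2]
    have e2 : (∑ u, ∑ v, degG G u * degG G v * adjW G u v : ℝ)
        = N3 + 2*S2 - (2*(n:ℝ)-2) := sum_dd_adj hn hT
    have e3 : (∑ u, ∑ v, if u = v then 2 * (degG G u * degG G v) else 0 : ℝ) = 2*S2 := by
      have : ∀ u : Fin n, (∑ v, if u = v then 2 * (degG G u * degG G v) else 0 : ℝ) =
          2 * (degG G u * degG G u) :=
        fun u => by rw [Finset.sum_ite_eq, if_pos (Finset.mem_univ u)]
      rw [Finset.sum_congr rfl fun u _ => this u, hS2def, Finset.mul_sum]
    rw [e1, e2, e3]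
  have hS2 : S2 = (2*(n:ℝ)-2) + N2 := sum_sq_degG hn hT
  have hN2pos : 0 ≤ N2 := by
    rw [hN2def]
    refine Finset.sum_nonneg fun x _ => Finset.sum_nonneg fun y _ => ?_
    split <;> norm_num
  have hN3pos : 0 ≤ N3 := by
    rw [hN3def]
    refine Finset.sum_nonneg fun x _ => Finset.sum_nonneg fun y _ => ?_
    split <;> norm_num
  -- counting bound
  have hcount : (2*(n:ℝ)-2) + N2 + N3 ≤ (n:ℝ)*(n:ℝ) - (n:ℝ) := by
    have hN1 : (∑ x, ∑ y, if G.dist x y = 1 then (1:ℝ) else 0) = 2*(n:ℝ)-2 := by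
      have : ∀ x y : Fin n, (if G.dist x y = 1 then (1:ℝ) else 0) = adjW G x y := by
        intro x y
        by_cases h : G.Adj x y
        · rw [if_pos (SimpleGraph.dist_eq_one_iff_adj.2 h), adjW, if_pos h]
        · rw [if_neg (fun hh => h (SimpleGraph.dist_eq_one_iff_adj.1 hh)), adjW, if_neg h]
      rw [Finset.sum_congr rfl fun x _ => Finset.sum_congr rfl fun y _ => this x y]
      have hd : ∀ s : Fin n, (∑ t, adjW G s t) = degG G s := fun s => rfl
      rw [Finset.sum_congr rfl fun s (_ : s ∈ Finset.univ) => hd s]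
      exact sum_degG hn hT
    have hptc : ∀ x y : Fin n,
        (if G.dist x y = 1 then (1:ℝ) else 0) + (if G.dist x y = 2 then (1:ℝ) else 0)
          + (if G.dist x y = 3 then (1:ℝ) else 0) ≤ (if x = y then 0 else 1) := by
      intro x y
      rcases eq_or_ne x y with rfl | h
      · simp [SimpleGraph.dist_self]
      · rw [if_neg h]
        rcases Nat.lt_or_ge (G.dist x y) 4 with h4 | h4
        · interval_cases h : G.dist x y <;> norm_num
        · rw [if_neg (by omega), if_neg (by omega), if_neg (by omega)]
          norm_num
    have hsum : (∑ x : Fin n, ∑ y : Fin n, (if x = y then (0:ℝ) else 1)) = (n:ℝ)*(n:ℝ) - n := by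
      have : ∀ x : Fin n, (∑ y : Fin n, if x = y then (0:ℝ) else 1) = (n:ℝ) - 1 := by
        intro x
        have h1 : ∀ y : Fin n, (if x = y then (0:ℝ) else 1) = 1 - (if x = y then 1 else 0) := by
          intro y; split <;> ring
        rw [Finset.sum_congr rfl fun y _ => h1 y, Finset.sum_sub_distrib, Finset.sum_const,
          Finset.sum_ite_eq, if_pos (Finset.mem_univ x)]
        simp [Finset.card_univ]
      rw [Finset.sum_congr rfl fun x _ => this x, Finset.sum_const]
      simp [Finset.card_univ]
      ring
    have := Finset.sum_le_sum (f := fun x => ∑ y, ((if G.dist x y = 1 then (1:ℝ) else 0)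
      + (if G.dist x y = 2 then (1:ℝ) else 0) + (if G.dist x y = 3 then (1:ℝ) else 0)))
      (g := fun x => ∑ y : Fin n, (if x = y then (0:ℝ) else 1))
      (fun x (_ : x ∈ Finset.univ) => Finset.sum_le_sum fun y _ => hptc x y)
    rw [hsum] at this
    rw [Finset.sum_congr rfl (fun x (_ : x ∈ Finset.univ) => Finset.sum_add_distrib),
      Finset.sum_add_distrib] at this
    rw [Finset.sum_congr rfl (fun x (_ : x ∈ Finset.univ) => Finset.sum_add_distrib),
      Finset.sum_add_distrib] at this
    rw [hN1] at this
    rw [← hN2def, ← hN3def] at this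
    linarith
  have hmain : (∑ u, ∑ v, g u v) ≤ ∑ u, ∑ v, degG G u * degG G v * (G.dist u v : ℝ) :=
    Finset.sum_le_sum fun u _ => Finset.sum_le_sum fun v _ => hpt u v
  constructor
  · nlinarith [hsum_g, hS2, hcount, hN3pos, hN2pos, hmain]
  · constructor
    · intro hEq
      -- equality forces each pointwise equality
      have hg_ge : 2*((n:ℝ)-1)*(2*(n:ℝ)-3) ≤ ∑ u, ∑ v, g u v := by
        nlinarith [hsum_g, hS2, hcount, hN3pos, hN2pos]
      have hzero : (∑ u, ∑ v, (degG G u * degG G v * (G.dist u v : ℝ) - g u v)) = 0 := by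
        rw [Finset.sum_congr rfl (fun u (_ : u ∈ Finset.univ) => Finset.sum_sub_distrib _ _),
          Finset.sum_sub_distrib]
        rw [hEq]
        linarith [hmain, hg_ge]
      have hnn : ∀ u ∈ Finset.univ, (0:ℝ) ≤
          ∑ v, (degG G u * degG G v * (G.dist u v : ℝ) - g u v) :=
        fun u _ => Finset.sum_nonneg fun v _ => by linarith [hpt u v]
      have houter := (Finset.sum_eq_zero_iff_of_nonneg hnn).1 hzero
      intro u v
      have hinner := (Finset.sum_eq_zero_iff_of_nonneg
        (fun v (_ : v ∈ Finset.univ) => by linarith [hpt u v])).1 (houter u (Finset.mem_univ u))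
      have := hinner v (Finset.mem_univ v)
      exact hpt_eq_rev u v (by linarith [this])
    · intro hd2
      have hEq1 : (∑ u, ∑ v, degG G u * degG G v * (G.dist u v : ℝ)) = ∑ u, ∑ v, g u v :=
        (Finset.sum_congr rfl fun u _ => Finset.sum_congr rfl fun v _ =>
          (hpt_eq u v (hd2 u v)).symm)
      have hN3z : N3 = 0 := by
        rw [hN3def]
        refine Finset.sum_eq_zero fun x _ => Finset.sum_eq_zero fun y _ => ?_
        rw [if_neg (by have := hd2 x y; omega)]
      have hcount_eq : (2*(n:ℝ)-2) + N2 + N3 = (n:ℝ)*(n:ℝ) - (n:ℝ) := by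
        have hN1 : (∑ x, ∑ y, if G.dist x y = 1 then (1:ℝ) else 0) = 2*(n:ℝ)-2 := by
          have : ∀ x y : Fin n, (if G.dist x y = 1 then (1:ℝ) else 0) = adjW G x y := by
            intro x y
            by_cases h : G.Adj x y
            · rw [if_pos (SimpleGraph.dist_eq_one_iff_adj.2 h), adjW, if_pos h]
            · rw [if_neg (fun hh => h (SimpleGraph.dist_eq_one_iff_adj.1 hh)), adjW, if_neg h]
          rw [Finset.sum_congr rfl fun x _ => Finset.sum_congr rfl fun y _ => this x y]
          have hd : ∀ s : Fin n, (∑ t, adjW G s t) = degG G s := fun s => rfl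
          rw [Finset.sum_congr rfl fun s (_ : s ∈ Finset.univ) => hd s]
          exact sum_degG hn hT
        have hptc : ∀ x y : Fin n,
            (if G.dist x y = 1 then (1:ℝ) else 0) + (if G.dist x y = 2 then (1:ℝ) else 0)
              + (if G.dist x y = 3 then (1:ℝ) else 0) = (if x = y then 0 else 1) := by
          intro x y
          rcases eq_or_ne x y with rfl | h
          · simp [SimpleGraph.dist_self]
          · rw [if_neg h]
            have h0 : G.dist x y ≠ 0 := (hT.isConnected.pos_dist_of_ne h).ne'
            have hle := hd2 x y
            interval_cases hh : G.dist x y <;> norm_num <;> omega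
        have hsum : (∑ x : Fin n, ∑ y : Fin n, (if x = y then (0:ℝ) else 1))
            = (n:ℝ)*(n:ℝ) - n := by
          have : ∀ x : Fin n, (∑ y : Fin n, if x = y then (0:ℝ) else 1) = (n:ℝ) - 1 := by
            intro x
            have h1 : ∀ y : Fin n, (if x = y then (0:ℝ) else 1)
                = 1 - (if x = y then 1 else 0) := by
              intro y; split <;> ring
            rw [Finset.sum_congr rfl fun y _ => h1 y, Finset.sum_sub_distrib, Finset.sum_const,
              Finset.sum_ite_eq, if_pos (Finset.mem_univ x)]
            simp [Finset.card_univ]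
          rw [Finset.sum_congr rfl fun x _ => this x, Finset.sum_const]
          simp [Finset.card_univ]
          ring
        have heq := Finset.sum_congr rfl fun x (_ : x ∈ Finset.univ) =>
          Finset.sum_congr rfl fun y (_ : y ∈ Finset.univ) => hptc x y
        rw [hsum] at heq
        rw [Finset.sum_congr rfl (fun x (_ : x ∈ Finset.univ) => Finset.sum_add_distrib),
          Finset.sum_add_distrib] at heq
        rw [Finset.sum_congr rfl (fun x (_ : x ∈ Finset.univ) => Finset.sum_add_distrib),
          Finset.sum_add_distrib] at heq
        rw [hN1, ← hN2def, ← hN3def] at heq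
        linarith
      rw [hEq1]
      nlinarith [hsum_g, hS2, hcount_eq, hN3z]



lemma dist_le_two_of_iso {G : SimpleGraph (Fin n)} (hn : 2 ≤ n) (f : G ≃g _root_.starGraph n)
    (u v : Fin n) : G.dist u v ≤ 2 := by
  obtain ⟨p, hp⟩ := ((star_connected hn) (f u) (f v)).exists_walk_length_eq_dist
  have h2 : p.length ≤ 2 := by rw [hp]; exact star_dist_le_two hn _ _
  have hq := SimpleGraph.dist_le (p.map (f.symm.toHom))
  rw [SimpleGraph.Walk.length_map] at hq
  simp at hq
  omega

lemma mk_path4 {G : SimpleGraph (Fin n)} {a b c d e : Fin n}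
    (h1 : G.Adj a b) (h2 : G.Adj b c) (h3 : G.Adj c d) (h4 : G.Adj d e)
    (hac : a ≠ c) (had : a ≠ d) (hae : a ≠ e) (hbd : b ≠ d) (hbe : b ≠ e) (hce : c ≠ e) :
    (SimpleGraph.Walk.cons h1 (SimpleGraph.Walk.cons h2 (SimpleGraph.Walk.cons h3
      (SimpleGraph.Walk.cons h4 SimpleGraph.Walk.nil)))).IsPath := by
  rw [SimpleGraph.Walk.cons_isPath_iff]
  exact ⟨mk_path3 h2 h3 h4 hbd.symm hce hbe, by simp [h1.ne, hac, had, hae]⟩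

lemma exists_universal {G : SimpleGraph (Fin n)} (hn : 2 ≤ n) (hT : G.IsTree)
    (hd2 : ∀ u v, G.dist u v ≤ 2) : ∃ c, ∀ w, w ≠ c → G.Adj c w := by
  -- get an edge
  obtain ⟨u, v, hadj⟩ : ∃ u v, G.Adj u v := by
    have hne : (⟨0, by omega⟩ : Fin n) ≠ ⟨1, by omega⟩ := by
      intro h; exact absurd (congrArg Fin.val h) (by norm_num)
    obtain ⟨p, hp⟩ := (hT.isConnected ⟨0, by omega⟩ ⟨1, by omega⟩).exists_walk_length_eq_dist
    cases p with
    | cons h r => exact ⟨_, _, h⟩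
  -- every other vertex is adjacent to u or v
  have hW : ∀ w, w ≠ u → w ≠ v → (G.Adj u w ∨ G.Adj v w) := by
    intro w hwu hwv
    by_contra hcon
    push_neg at hcon
    obtain ⟨hnu, hnv⟩ := hcon
    have hdu : G.dist u w = 2 := by
      have h0 : G.dist u w ≠ 0 := (hT.isConnected.pos_dist_of_ne (Ne.symm hwu)).ne'
      have h1 : G.dist u w ≠ 1 := fun h => hnu (SimpleGraph.dist_eq_one_iff_adj.1 h)
      have := hd2 u w
      omega
    have hdv : G.dist v w = 2 := by
      have h0 : G.dist v w ≠ 0 := (hT.isConnected.pos_dist_of_ne (Ne.symm hwv)).ne'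
      have h1 : G.dist v w ≠ 1 := fun h => hnv (SimpleGraph.dist_eq_one_iff_adj.1 h)
      have := hd2 v w
      omega
    obtain ⟨m, hm1, hm2⟩ := (exists_common_iff_dist_two hT (Ne.symm hwu)).2 hdu
    obtain ⟨m', hm1', hm2'⟩ := (exists_common_iff_dist_two hT (Ne.symm hwv)).2 hdv
    have hmv : m ≠ v := fun h => hnv (by rw [← h]; exact hm2)
    have hm'u : m' ≠ u := fun h => hnu (by rw [← h]; exact hm2')
    rcases eq_or_ne m m' with rfl | hmm
    · exact no_triangle hT hadj hm1' hm1.symm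
    · have hp4 := mk_path4 hm1 hm2 hm2'.symm hm1'.symm
        (Ne.symm hwu) (Ne.symm hm'u) hadj.ne hmm hmv hwv
      have heq := walk_eq_of_isPath hT (SimpleGraph.Path.singleton hadj).prop hp4
      have := congrArg SimpleGraph.Walk.length heq
      simp at this
  by_cases hu : ∀ w, w ≠ u → G.Adj u w
  · exact ⟨u, hu⟩
  · push_neg at hu
    obtain ⟨a, hau, hna⟩ := hu
    have hav : a ≠ v := fun h => hna (by rw [h]; exact hadj)
    have hva : G.Adj v a := (hW a hau hav).resolve_left hna
    refine ⟨v, fun w hwv => ?_⟩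
    rcases eq_or_ne w u with rfl | hwu
    · exact hadj.symm
    · by_contra hnw
      have huw : G.Adj u w := (hW w hwu hwv).resolve_right hnw
      have haw : a ≠ w := fun h => hna (by rw [h]; exact huw)
      have p2 := mk_path3 hva.symm hadj.symm huw (Ne.symm hau) (Ne.symm hwv) haw
      by_cases hawadj : G.Adj a w
      · have heq := walk_eq_of_isPath hT (SimpleGraph.Path.singleton hawadj).prop p2
        have := congrArg SimpleGraph.Walk.length heq
        simp at this
      · have hdaw : G.dist a w = 2 := by
          have h0 : G.dist a w ≠ 0 := (hT.isConnected.pos_dist_of_ne haw).ne'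
          have h1 : G.dist a w ≠ 1 := fun h => hawadj (SimpleGraph.dist_eq_one_iff_adj.1 h)
          have := hd2 a w
          omega
        obtain ⟨m, hma, hmw⟩ := (exists_common_iff_dist_two hT haw).2 hdaw
        have p1 : (SimpleGraph.Walk.cons hma (SimpleGraph.Walk.cons hmw
            SimpleGraph.Walk.nil)).IsPath := by
          rw [SimpleGraph.Walk.cons_isPath_iff]
          exact ⟨(SimpleGraph.Path.singleton hmw).prop, by simp [hma.ne, haw]⟩
        have heq := walk_eq_of_isPath hT p1 p2
        have := congrArg SimpleGraph.Walk.length heq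
        simp at this

lemma iso_star_of_diam2 {G : SimpleGraph (Fin n)} (hn : 2 ≤ n) (hT : G.IsTree)
    (hd2 : ∀ u v, G.dist u v ≤ 2) : Nonempty (G ≃g _root_.starGraph n) := by
  obtain ⟨c, hc⟩ := exists_universal hn hT hd2
  have hedge : ∀ x y, G.Adj x y → x = c ∨ y = c := by
    intro x y hxy
    by_contra hcon
    push_neg at hcon
    obtain ⟨hx, hy⟩ := hcon
    exact no_triangle hT (hc x hx) hxy ((hc y hy).symm)
  have hGadj : ∀ x y, G.Adj x y ↔ x ≠ y ∧ (x = c ∨ y = c) := by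
    intro x y
    constructor
    · intro h
      exact ⟨h.ne, hedge x y h⟩
    · rintro ⟨hne, rfl | rfl⟩
      · exact hc y (Ne.symm hne)
      · exact (hc x hne).symm
  set e : Equiv.Perm (Fin n) := Equiv.swap c ⟨0, by omega⟩ with he
  have hez : ∀ x, e x = (⟨0, by omega⟩ : Fin n) ↔ x = c := by
    intro x
    rw [he, Equiv.apply_eq_iff_eq_symm_apply, Equiv.symm_swap, Equiv.swap_apply_right]
  refine ⟨⟨e, ?_⟩⟩
  intro x y
  rw [star_adj hn, hGadj x y, hez x, hez y]
  constructor
  · rintro ⟨h1, h2⟩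
    exact ⟨fun hh => h1 (by rw [hh]), h2⟩
  · rintro ⟨h1, h2⟩
    exact ⟨fun hh => h1 (e.injective hh), h2⟩



end KemenyAux

open KemenyAux in
theorem stmt3 {n : ℕ} (hn : 2 ≤ n) (T : SimpleGraph (Fin n)) (hT : T.IsTree) :
    sumInvEig (nlapG (starGraph n)) ≤ sumInvEig (nlapG T) ∧
    (sumInvEig (nlapG T) = sumInvEig (nlapG (starGraph n)) ↔
      Nonempty (T ≃g starGraph n))  := by
  classical
  have hstar : (starGraph n).IsTree := KemenyAux.star_isTree (n := n) hn
  have hformT := KemenyAux.kemeny_eq hn hT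
  have hformS := KemenyAux.kemeny_eq hn hstar
  have hboundT := KemenyAux.sigma_bound hn hT
  have hboundS := KemenyAux.sigma_bound hn hstar
  have hSstar : (∑ u, ∑ v, degG (starGraph n) u * degG (starGraph n) v *
      ((starGraph n).dist u v : ℝ)) = 2*((n:ℝ)-1)*(2*(n:ℝ)-3) :=
    hboundS.2.mpr (fun u v => KemenyAux.star_dist_le_two hn u v)
  have hn' : (2:ℝ) ≤ (n:ℝ) := by exact_mod_cast hn
  have hc : (0:ℝ) < 2*(2*(n:ℝ)-2) := by linarith
  constructor
  · rw [hformT, hformS, hSstar]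
    exact (div_le_div_iff_of_pos_right hc).mpr hboundT.1
  · rw [hformT, hformS, hSstar]
    constructor
    · intro h
      have hEq : (∑ u, ∑ v, degG T u * degG T v * (T.dist u v : ℝ))
          = 2*((n:ℝ)-1)*(2*(n:ℝ)-3) := by
        have hn1 : (n:ℝ) - 1 ≠ 0 := by intro h; linarith
        field_simp at h
        linarith [h]
      exact KemenyAux.iso_star_of_diam2 hn hT (hboundT.2.mp hEq)
    · rintro ⟨f⟩
      have hEq := hboundT.2.mpr (fun u v => KemenyAux.dist_le_two_of_iso hn f u v)
      rw [hEq]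
end
end

section
/- Let T be a weighted tree on n vertices with positive edge weights, and let 0 = λ_0 < λ_1 ≤ ⋯ ≤ λ_{n−1} be the eigenvalues of its combinatorial Laplacian. Then Σ_{i=1}^{n−1} λ_i^{−1} = (1/n) · Σ_{e ∈ E(T)} |T_1(e)|·|T_2(e)| / ω(e), where for each edge e, T_1(e) and T_2(e) denote the two connected components of T with e deleted. -/
open scoped Classical

noncomputable section

namespace Stmt6Aux

open SimpleGraph

variable {n : ℕ}

/-- `u` and `v` are separated by removing edge `e`. -/
def sepd (G : SimpleGraph (Fin n)) (e : Sym2 (Fin n)) (u v : Fin n) : Prop :=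
  ¬ (G.deleteEdges {e}).Reachable u v

lemma not_sepd_self (G : SimpleGraph (Fin n)) (e : Sym2 (Fin n)) (u : Fin n) :
    ¬ sepd G e u u := fun h => h (Reachable.refl u)

lemma sepd_comm {G : SimpleGraph (Fin n)} {e : Sym2 (Fin n)} {u v : Fin n} :
    sepd G e u v ↔ sepd G e v u := by
  unfold sepd; rw [reachable_comm]

lemma tree_bridge {G : SimpleGraph (Fin n)} (hT : G.IsTree) {a b : Fin n} (hab : G.Adj a b) :
    sepd G s(a,b) a b :=
  ((isBridge_iff).mp ((isAcyclic_iff_forall_adj_isBridge.mp hT.IsAcyclic) hab))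

lemma reach_cover_aux {G : SimpleGraph (Fin n)} {a b : Fin n} :
    ∀ {v : Fin n} (_ : G.Walk v a),
      (G.deleteEdges {s(a,b)}).Reachable v a ∨ (G.deleteEdges {s(a,b)}).Reachable v b
  | _, Walk.nil => Or.inl (Reachable.refl _)
  | v, Walk.cons (v := w) h q => by
    by_cases he : s(v, w) = s(a, b)
    · rw [Sym2.eq_iff] at he
      rcases he with ⟨rfl, rfl⟩ | ⟨rfl, rfl⟩
      · exact Or.inl (Reachable.refl _)
      · exact Or.inr (Reachable.refl _)
    · have hadj : (G.deleteEdges {s(a,b)}).Adj v w := by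
        rw [deleteEdges_adj]
        exact ⟨h, by simpa using he⟩
      rcases reach_cover_aux q with h1 | h1
      · exact Or.inl (hadj.reachable.trans h1)
      · exact Or.inr (hadj.reachable.trans h1)

lemma reach_cover {G : SimpleGraph (Fin n)} (hC : G.Connected) {a b : Fin n} (_ : G.Adj a b)
    (v : Fin n) :
    (G.deleteEdges {s(a,b)}).Reachable v a ∨ (G.deleteEdges {s(a,b)}).Reachable v b := by
  obtain ⟨p⟩ := hC.preconnected v a
  exact reach_cover_aux p

lemma not_reach_both {G : SimpleGraph (Fin n)} (hT : G.IsTree) {a b : Fin n} (hab : G.Adj a b)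
    {v : Fin n} (ha : (G.deleteEdges {s(a,b)}).Reachable v a)
    (hb : (G.deleteEdges {s(a,b)}).Reachable v b) : False :=
  tree_bridge hT hab (ha.symm.trans hb)

/-- An edge different from `s(u,x)` (with `u,x` adjacent) does not separate `u` from `x`'s side. -/
lemma sepd_iff_of_adj {G : SimpleGraph (Fin n)} {e : Sym2 (Fin n)} {u x : Fin n}
    (hux : G.Adj u x) (hne : e ≠ s(u,x)) (v : Fin n) :
    (sepd G e u v ↔ sepd G e x v) := by
  have hadj : (G.deleteEdges {e}).Adj u x := by
    rw [deleteEdges_adj]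
    exact ⟨hux, by simpa using fun h => hne h.symm⟩
  unfold sepd
  constructor
  · intro h h'; exact h (hadj.reachable.trans h')
  · intro h h'; exact h (hadj.symm.reachable.trans h')

/-- For `u ≠ v` in a tree, exactly one neighbour `x` of `u` is such that removing `ux`
separates `u` from `v`. -/
lemma unique_sep_neighbor {G : SimpleGraph (Fin n)} (hT : G.IsTree) {u v : Fin n} (huv : u ≠ v) :
    ∃! x : Fin n, G.Adj u x ∧ sepd G s(u,x) u v := by
  obtain ⟨p0⟩ := hT.isConnected.preconnected u v
  let P := p0.toPath
  obtain ⟨x₀, h₀, q, hpq⟩ := Walk.exists_eq_cons_of_ne huv P.val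
  have hPpath : (P.val).IsPath := P.property
  have hnodup : s(u, x₀) ∉ q.edges := by
    have := hPpath.isTrail.edges_nodup
    rw [hpq] at this
    simp only [Walk.edges_cons, List.nodup_cons] at this
    exact this.1
  have husup : u ∉ q.support := by
    have := hPpath.support_nodup
    rw [hpq] at this
    simp only [Walk.support_cons, List.nodup_cons] at this
    exact this.1
  refine ⟨x₀, ⟨h₀, ?_⟩, ?_⟩
  · -- sepd s(u,x₀) u v
    intro hreach
    -- q avoids the edge, so x₀ reaches v in the deleted graph
    have hq : (G.deleteEdges {s(u,x₀)}).Reachable x₀ v :=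
      ⟨q.toDeleteEdges {s(u,x₀)} (by intro e he hee; rw [Set.mem_singleton_iff] at hee; exact hnodup (hee ▸ he))⟩
    exact not_reach_both hT h₀ (v := v) hreach.symm hq.symm
  · rintro x ⟨hx, hsep⟩
    -- the path must use the edge s(u,x)
    have hmem : s(u, x) ∈ P.val.edges := by
      by_contra hnm
      exact hsep ⟨P.val.toDeleteEdges {s(u,x)}
        (by intro e he hee; rw [Set.mem_singleton_iff] at hee; exact hnm (hee ▸ he))⟩
    rw [hpq] at hmem
    simp only [Walk.edges_cons, List.mem_cons] at hmem
    rcases hmem with hmem | hmem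
    · rw [Sym2.eq_iff] at hmem
      rcases hmem with ⟨-, rfl⟩ | ⟨h1, h2⟩
      · rfl
      · exact absurd (h1 ▸ h₀) (G.irrefl)
    · exact absurd (Walk.fst_mem_support_of_mem_edges q hmem) husup

end Stmt6Aux
namespace Stmt6Aux

open SimpleGraph

variable {n : ℕ}

/-- The vertices on the `a` side after deleting the edge `ab`. -/
def sideA (G : SimpleGraph (Fin n)) (a b : Fin n) : Finset (Fin n) :=
  Finset.univ.filter (fun u => (G.deleteEdges {s(a,b)}).Reachable u a)

def sideB (G : SimpleGraph (Fin n)) (a b : Fin n) : Finset (Fin n) :=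
  Finset.univ.filter (fun u => (G.deleteEdges {s(a,b)}).Reachable u b)

variable {G : SimpleGraph (Fin n)} {a b : Fin n}

lemma mem_sideA {u : Fin n} : u ∈ sideA G a b ↔ (G.deleteEdges {s(a,b)}).Reachable u a := by
  simp [sideA]

lemma mem_sideB {u : Fin n} : u ∈ sideB G a b ↔ (G.deleteEdges {s(a,b)}).Reachable u b := by
  simp [sideB]

lemma not_mem_sideA_iff (hT : G.IsTree) (hab : G.Adj a b) {u : Fin n} :
    u ∉ sideA G a b ↔ u ∈ sideB G a b := by
  rw [mem_sideA, mem_sideB]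
  constructor
  · intro h
    rcases reach_cover hT.isConnected hab u with h1 | h1
    · exact absurd h1 h
    · exact h1
  · intro h h'
    exact not_reach_both hT hab h' h

lemma sepd_iff_mem_sideB (hT : G.IsTree) (hab : G.Adj a b) {u v : Fin n}
    (hu : u ∈ sideA G a b) : (sepd G s(a,b) u v ↔ v ∈ sideB G a b) := by
  rw [mem_sideA] at hu
  constructor
  · intro h
    rw [← not_mem_sideA_iff hT hab, mem_sideA]
    intro hv
    exact h (hu.trans hv.symm)
  · intro hv hr
    rw [mem_sideB] at hv
    exact not_reach_both hT hab (v := u) hu (hr.trans hv)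

lemma sepd_iff_mem_sideA (hT : G.IsTree) (hab : G.Adj a b) {u v : Fin n}
    (hu : u ∈ sideB G a b) : (sepd G s(a,b) u v ↔ v ∈ sideA G a b) := by
  rw [mem_sideB] at hu
  constructor
  · intro h
    by_contra hv
    rw [not_mem_sideA_iff hT hab, mem_sideB] at hv
    exact h (hu.trans hv.symm)
  · intro hv hr
    rw [mem_sideA] at hv
    exact not_reach_both hT hab (v := u) (hr.trans hv) hu

lemma sum_indicator_sideB : (∑ v : Fin n, if v ∈ sideB G a b then (1:ℝ) else 0)
    = (sideB G a b).card := by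
  rw [Finset.sum_ite_mem, Finset.univ_inter, Finset.sum_const, nsmul_eq_mul, mul_one]

lemma sum_indicator_sideA : (∑ v : Fin n, if v ∈ sideA G a b then (1:ℝ) else 0)
    = (sideA G a b).card := by
  rw [Finset.sum_ite_mem, Finset.univ_inter, Finset.sum_const, nsmul_eq_mul, mul_one]

/-- The number of ordered separated pairs. -/
lemma pair_count (hT : G.IsTree) (hab : G.Adj a b) :
    (∑ u : Fin n, ∑ v : Fin n, if sepd G s(a,b) u v then (1:ℝ) else 0)
      = 2 * (sideA G a b).card * (sideB G a b).card := by
  have hsplit := Finset.sum_filter_add_sum_filter_not Finset.univ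
    (fun u => (G.deleteEdges {s(a,b)}).Reachable u a)
    (fun u => ∑ v : Fin n, if sepd G s(a,b) u v then (1:ℝ) else 0)
  have hA : Finset.univ.filter (fun u => (G.deleteEdges {s(a,b)}).Reachable u a) = sideA G a b := rfl
  have hB : Finset.univ.filter (fun u => ¬ (G.deleteEdges {s(a,b)}).Reachable u a) = sideB G a b := by
    ext u
    simp only [Finset.mem_filter, Finset.mem_univ, true_and]
    rw [← mem_sideA, not_mem_sideA_iff hT hab]
  rw [hA, hB] at hsplit
  rw [← hsplit]
  have h1 : ∀ u ∈ sideA G a b, (∑ v : Fin n, if sepd G s(a,b) u v then (1:ℝ) else 0)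
      = (sideB G a b).card := by
    intro u hu
    rw [← sum_indicator_sideB]
    exact Finset.sum_congr rfl fun v _ => by
      rw [if_congr (sepd_iff_mem_sideB hT hab hu) rfl rfl]
  have h2 : ∀ u ∈ sideB G a b, (∑ v : Fin n, if sepd G s(a,b) u v then (1:ℝ) else 0)
      = (sideA G a b).card := by
    intro u hu
    rw [← sum_indicator_sideA]
    exact Finset.sum_congr rfl fun v _ => by
      rw [if_congr (sepd_iff_mem_sideA hT hab hu) rfl rfl]
  rw [Finset.sum_congr rfl h1, Finset.sum_congr rfl h2, Finset.sum_const, Finset.sum_const,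
    nsmul_eq_mul, nsmul_eq_mul]
  ring

lemma supp_eq_sideA (hab : G.Adj a b) :
    ((G.deleteEdges {s(a,b)}).connectedComponentMk a).supp = ↑(sideA G a b) := by
  ext u
  rw [ConnectedComponent.mem_supp_iff, Finset.mem_coe, mem_sideA, ConnectedComponent.eq]

lemma supp_eq_sideB (hab : G.Adj a b) :
    ((G.deleteEdges {s(a,b)}).connectedComponentMk b).supp = ↑(sideB G a b) := by
  ext u
  rw [ConnectedComponent.mem_supp_iff, Finset.mem_coe, mem_sideB, ConnectedComponent.eq]

lemma SVal_eq (hT : G.IsTree) (hab : G.Adj a b) :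
    SVal (G.deleteEdges {s(a,b)}) = (sideA G a b).card * (sideB G a b).card := by
  classical
  set H := G.deleteEdges {s(a,b)} with hH
  have hne : H.connectedComponentMk a ≠ H.connectedComponentMk b := by
    rw [Ne, ConnectedComponent.eq]
    exact tree_bridge hT hab
  have huniv : (Set.univ : Set H.ConnectedComponent)
      = {H.connectedComponentMk a, H.connectedComponentMk b} := by
    ext c
    simp only [Set.mem_univ, Set.mem_insert_iff, Set.mem_singleton_iff, true_iff]
    induction c using SimpleGraph.ConnectedComponent.ind with
    | _ v =>
      rcases reach_cover hT.isConnected hab v with h1 | h1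
      · exact Or.inl (ConnectedComponent.sound h1)
      · exact Or.inr (ConnectedComponent.sound h1)
  unfold SVal
  rw [← finprod_mem_univ, huniv, finprod_mem_pair hne]
  have e1 : Nat.card (H.connectedComponentMk a).supp = (sideA G a b).card := by
    rw [Nat.card_coe_set_eq, supp_eq_sideA hab, Set.ncard_coe_finset]
  have e2 : Nat.card (H.connectedComponentMk b).supp = (sideB G a b).card := by
    rw [Nat.card_coe_set_eq, supp_eq_sideB hab, Set.ncard_coe_finset]
  rw [e1, e2]

end Stmt6Aux
namespace Stmt6Aux

open SimpleGraph Matrix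

variable {n : ℕ}

/-- The resistance matrix of a weighted tree. -/
def Rm (T : WGraph n) : Matrix (Fin n) (Fin n) ℝ :=
  Matrix.of fun u v =>
    ∑ e : Sym2 (Fin n), if e ∈ T.G.edgeSet ∧ sepd T.G e u v then (T.ew e)⁻¹ else 0

lemma w_nonneg (T : WGraph n) (u v : Fin n) : 0 ≤ T.w u v := by
  by_cases h : T.G.Adj u v
  · exact (T.pos u v h).le
  · exact (T.zero u v h).ge

lemma ew_mk (T : WGraph n) (u v : Fin n) : T.ew s(u,v) = T.w u v := rfl

lemma Rm_diag (T : WGraph n) (u : Fin n) : Rm T u u = 0 := by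
  unfold Rm
  rw [Matrix.of_apply]
  exact Finset.sum_eq_zero fun e _ => by
    rw [if_neg]
    rintro ⟨-, h⟩
    exact not_sepd_self T.G e u h

lemma Rm_symm (T : WGraph n) (u v : Fin n) : Rm T u v = Rm T v u := by
  unfold Rm
  rw [Matrix.of_apply, Matrix.of_apply]
  refine Finset.sum_congr rfl fun e _ => ?_
  rw [if_congr (and_congr_right fun _ => sepd_comm) rfl rfl]

lemma Rm_diff (T : WGraph n) (hT : T.G.IsTree) {u x : Fin n} (hux : T.G.Adj u x) (v : Fin n) :
    Rm T u v - Rm T x v = (if sepd T.G s(u,x) u v then 1 else -1) * (T.w u x)⁻¹ := by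
  unfold Rm
  rw [Matrix.of_apply, Matrix.of_apply, ← Finset.sum_sub_distrib]
  rw [Finset.sum_eq_single (s(u,x))]
  · -- value at s(u,x)
    have hmem : s(u,x) ∈ T.G.edgeSet := hux
    by_cases hs : sepd T.G s(u,x) u v
    · have hx : ¬ sepd T.G s(u,x) x v := by
        rcases reach_cover hT.isConnected hux v with h1 | h1
        · exact absurd h1.symm hs
        · intro h2; exact h2 h1.symm
      rw [if_pos ⟨hmem, hs⟩, if_neg (fun h => hx h.2), if_pos hs, ew_mk, sub_zero, one_mul]
    · have hx : sepd T.G s(u,x) x v := by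
        intro h2
        rcases not_not.mp hs with h1
        exact tree_bridge hT hux (h1.trans h2.symm)
      rw [if_neg (fun h => hs h.2), if_pos ⟨hmem, hx⟩, if_neg hs, ew_mk, zero_sub, neg_one_mul]
  · intro e _ hne
    rw [if_congr (and_congr_right fun _ => sepd_iff_of_adj hux hne v) rfl rfl, sub_self]
  · intro h; exact absurd (Finset.mem_univ _) h

/-- number of neighbours, as a real number -/
def nbr (G : SimpleGraph (Fin n)) (u : Fin n) : ℝ := (Finset.univ.filter (G.Adj u)).card

lemma lap_apply (T : WGraph n) (u v : Fin n) :
    T.lap u v = (if u = v then T.deg u else 0) - T.w u v := rfl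

lemma lap_mul_apply (T : WGraph n) (M : Matrix (Fin n) (Fin n) ℝ) (u v : Fin n) :
    (T.lap * M) u v = ∑ x : Fin n, T.w u x * (M u v - M x v) := by
  rw [Matrix.mul_apply]
  have e0 : ∀ x, T.lap u x * M x v = (if u = x then T.deg u else 0) * M x v - T.w u x * M x v :=
    fun x => by rw [lap_apply, sub_mul]
  rw [Finset.sum_congr rfl fun x _ => e0 x, Finset.sum_sub_distrib]
  have h1 : (∑ x : Fin n, (if u = x then T.deg u else 0) * M x v) = T.deg u * M u v := by
    rw [Finset.sum_eq_single u]
    · rw [if_pos rfl]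
    · intro x _ hx; rw [if_neg (fun h => hx h.symm), zero_mul]
    · intro h; exact absurd (Finset.mem_univ _) h
  rw [h1, WGraph.deg, Finset.sum_mul, ← Finset.sum_sub_distrib]
  exact Finset.sum_congr rfl fun x _ => by ring

lemma lap_mul_R_apply (T : WGraph n) (hT : T.G.IsTree) (u v : Fin n) :
    (T.lap * Rm T) u v = (2 - nbr T.G u) - (if u = v then 2 else 0) := by
  rw [lap_mul_apply]
  have step : ∀ x : Fin n, T.w u x * (Rm T u v - Rm T x v)
      = (if T.G.Adj u x then (if sepd T.G s(u,x) u v then (1:ℝ) else -1) else 0) := by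
    intro x
    by_cases h : T.G.Adj u x
    · rw [Rm_diff T hT h v, if_pos h, ← mul_assoc, mul_comm (T.w u x), mul_assoc,
        mul_inv_cancel₀ (ne_of_gt (T.pos u x h)), mul_one]
    · rw [T.zero u x h, if_neg h, zero_mul]
  rw [Finset.sum_congr rfl fun x _ => step x]
  rw [← Finset.sum_filter]
  have expand : ∀ x ∈ Finset.univ.filter (T.G.Adj u),
      (if sepd T.G s(u,x) u v then (1:ℝ) else -1)
        = 2 * (if sepd T.G s(u,x) u v then (1:ℝ) else 0) - 1 := by
    intro x _
    by_cases h : sepd T.G s(u,x) u v <;> simp [h] <;> norm_num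
  rw [Finset.sum_congr rfl expand, Finset.sum_sub_distrib, Finset.sum_const, ← Finset.mul_sum,
    ← Finset.sum_filter, Finset.filter_filter]
  by_cases huv : u = v
  · subst huv
    have h0 : Finset.univ.filter (fun x => T.G.Adj u x ∧ sepd T.G s(u,x) u u) = ∅ := by
      refine Finset.filter_eq_empty_iff.mpr fun x _ => ?_
      rintro ⟨-, h⟩
      exact not_sepd_self T.G _ u h
    rw [h0, if_pos rfl]
    simp only [Finset.card_empty, Nat.cast_zero, mul_zero, Finset.sum_const, nbr,
      nsmul_eq_mul, mul_one]
    ring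
  · obtain ⟨x₀, hx₀, huniq⟩ := unique_sep_neighbor hT huv
    have h1 : Finset.univ.filter (fun x => T.G.Adj u x ∧ sepd T.G s(u,x) u v) = {x₀} := by
      ext x
      simp only [Finset.mem_filter, Finset.mem_univ, true_and, Finset.mem_singleton]
      exact ⟨fun h => huniq x h, fun h => h ▸ hx₀⟩
    rw [h1, if_neg huv]
    simp only [Finset.card_singleton, Nat.cast_one, mul_one, Finset.sum_const, nbr,
      nsmul_eq_mul]
    ring

end Stmt6Aux
namespace Stmt6Aux

open SimpleGraph Matrix

variable {n : ℕ}

def Pm (n : ℕ) : Matrix (Fin n) (Fin n) ℝ := Matrix.of fun _ _ => (n:ℝ)⁻¹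

def Qm (n : ℕ) : Matrix (Fin n) (Fin n) ℝ := 1 - Pm n

def Xm (T : WGraph n) : Matrix (Fin n) (Fin n) ℝ := (-(2:ℝ))⁻¹ • (Qm n * Rm T * Qm n)

lemma Pm_mul_Pm (hn : (n:ℝ) ≠ 0) : Pm n * Pm n = Pm n := by
  ext u v
  simp only [Matrix.mul_apply, Pm, Matrix.of_apply, Finset.sum_const, Finset.card_univ,
    Fintype.card_fin, nsmul_eq_mul]
  field_simp

lemma lap_rowsum (T : WGraph n) (u : Fin n) : ∑ x : Fin n, T.lap u x = 0 := by
  simp only [lap_apply, Finset.sum_sub_distrib, Finset.sum_ite_eq, Finset.mem_univ, if_pos]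
  rw [WGraph.deg, sub_self]

lemma lap_colsum (T : WGraph n) (x : Fin n) : ∑ u : Fin n, T.lap u x = 0 := by
  have : ∀ u : Fin n, T.lap u x = T.lap x u := by
    intro u
    rw [lap_apply, lap_apply, T.symm]
    by_cases h : u = x
    · subst h; rfl
    · rw [if_neg h, if_neg (fun h' => h h'.symm)]
  rw [Finset.sum_congr rfl fun u _ => this u]
  exact lap_rowsum T x

lemma lap_mul_Pm (T : WGraph n) : T.lap * Pm n = 0 := by
  ext u v
  simp only [Matrix.mul_apply, Pm, Matrix.of_apply, Matrix.zero_apply, ← Finset.sum_mul]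
  rw [lap_rowsum, zero_mul]

lemma Pm_mul_lap (T : WGraph n) : Pm n * T.lap = 0 := by
  ext u v
  simp only [Matrix.mul_apply, Pm, Matrix.of_apply, Matrix.zero_apply, ← Finset.mul_sum]
  rw [lap_colsum, mul_zero]

def Am (T : WGraph n) : Matrix (Fin n) (Fin n) ℝ := Matrix.of fun u _ => 2 - nbr T.G u

lemma lap_mul_Rm (T : WGraph n) (hT : T.G.IsTree) :
    T.lap * Rm T = Am T - (2:ℝ) • (1 : Matrix (Fin n) (Fin n) ℝ) := by
  ext u v
  rw [lap_mul_R_apply T hT u v]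
  simp only [Matrix.sub_apply, Am, Matrix.of_apply, Matrix.smul_apply, Matrix.one_apply,
    smul_eq_mul]
  by_cases h : u = v <;> simp [h]

lemma Am_mul_Pm (T : WGraph n) (hn : (n:ℝ) ≠ 0) : Am T * Pm n = Am T := by
  ext u v
  simp only [Matrix.mul_apply, Am, Pm, Matrix.of_apply, Finset.sum_const, Finset.card_univ,
    Fintype.card_fin, nsmul_eq_mul]
  field_simp

lemma lap_mul_Qm (T : WGraph n) : T.lap * Qm n = T.lap := by
  rw [Qm, Matrix.mul_sub, Matrix.mul_one, lap_mul_Pm, sub_zero]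

lemma lap_mul_Xm (T : WGraph n) (hT : T.G.IsTree) (hn : (n:ℝ) ≠ 0) :
    T.lap * Xm T = Qm n := by
  rw [Xm, Matrix.mul_smul, ← Matrix.mul_assoc, ← Matrix.mul_assoc, lap_mul_Qm, lap_mul_Rm T hT,
    Matrix.sub_mul, Qm, Matrix.mul_sub, Matrix.mul_one, Am_mul_Pm T hn, sub_self, zero_sub,
    Matrix.smul_mul, Matrix.mul_sub, Matrix.mul_one, Matrix.one_mul]
  rw [smul_neg, smul_smul]
  norm_num

lemma Qm_mul_Pm (hn : (n:ℝ) ≠ 0) : Qm n * Pm n = 0 := by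
  rw [Qm, Matrix.sub_mul, Matrix.one_mul, Pm_mul_Pm hn, sub_self]

lemma Pm_mul_Qm (hn : (n:ℝ) ≠ 0) : Pm n * Qm n = 0 := by
  rw [Qm, Matrix.mul_sub, Matrix.mul_one, Pm_mul_Pm hn, sub_self]

lemma Xm_mul_Pm (T : WGraph n) (hn : (n:ℝ) ≠ 0) : Xm T * Pm n = 0 := by
  rw [Xm, Matrix.smul_mul, Matrix.mul_assoc, Qm_mul_Pm hn, Matrix.mul_zero, smul_zero]

lemma Pm_mul_Xm (T : WGraph n) (hn : (n:ℝ) ≠ 0) : Pm n * Xm T = 0 := by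
  rw [Xm, Matrix.mul_smul, ← Matrix.mul_assoc, ← Matrix.mul_assoc, Pm_mul_Qm hn,
    Matrix.zero_mul, Matrix.zero_mul, smul_zero]

lemma Xm_rowsum (T : WGraph n) (hn : (n:ℝ) ≠ 0) (u : Fin n) :
    ∑ x : Fin n, Xm T u x = 0 := by
  have h := congrFun (congrFun (Xm_mul_Pm T hn) u) u
  simp only [Matrix.mul_apply, Pm, Matrix.of_apply, Matrix.zero_apply, ← Finset.sum_mul] at h
  rcases mul_eq_zero.mp h with h | h
  · exact h
  · exact absurd h (inv_ne_zero hn)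

lemma Xm_colsum (T : WGraph n) (hn : (n:ℝ) ≠ 0) (x : Fin n) :
    ∑ u : Fin n, Xm T u x = 0 := by
  have h := congrFun (congrFun (Pm_mul_Xm T hn) x) x
  simp only [Matrix.mul_apply, Pm, Matrix.of_apply, Matrix.zero_apply, ← Finset.mul_sum] at h
  rcases mul_eq_zero.mp h with h | h
  · exact absurd h (inv_ne_zero hn)
  · exact h

lemma Qm_mul_Qm (hn : (n:ℝ) ≠ 0) : Qm n * Qm n = Qm n := by
  rw [Qm, Matrix.mul_sub, Matrix.mul_one, Matrix.sub_mul, Matrix.one_mul, Pm_mul_Pm hn,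
    sub_self, sub_zero]

lemma trace_Rm (T : WGraph n) : Matrix.trace (Rm T) = 0 := by
  rw [Matrix.trace]
  exact Finset.sum_eq_zero fun u _ => Rm_diag T u

lemma trace_Xm (T : WGraph n) (hn : (n:ℝ) ≠ 0) :
    Matrix.trace (Xm T) = (2 * n : ℝ)⁻¹ * ∑ u : Fin n, ∑ v : Fin n, Rm T u v := by
  rw [Xm, Matrix.trace_smul, Matrix.trace_mul_comm (Qm n * Rm T) (Qm n), ← Matrix.mul_assoc,
    Qm_mul_Qm hn]
  rw [Qm, Matrix.sub_mul, Matrix.one_mul, Matrix.trace_sub, trace_Rm]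
  have htr : Matrix.trace (Pm n * Rm T) = (n:ℝ)⁻¹ * ∑ u : Fin n, ∑ v : Fin n, Rm T u v := by
    rw [Matrix.trace]
    simp only [Matrix.diag_apply, Matrix.mul_apply, Pm, Matrix.of_apply, ← Finset.mul_sum]
    congr 1
    exact Finset.sum_comm
  rw [htr, zero_sub, smul_eq_mul]
  rw [mul_inv (2:ℝ) (n:ℝ)]
  ring
end Stmt6Aux
namespace Stmt6Aux

open SimpleGraph Matrix

variable {n : ℕ}

lemma lap_mulVec_apply (T : WGraph n) (f : Fin n → ℝ) (u : Fin n) :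
    (T.lap *ᵥ f) u = ∑ x : Fin n, T.w u x * (f u - f x) := by
  have e0 : (T.lap *ᵥ f) u = ∑ x : Fin n, T.lap u x * f x := rfl
  rw [e0]
  have e1 : ∀ x, T.lap u x * f x = (if u = x then T.deg u else 0) * f x - T.w u x * f x :=
    fun x => by rw [lap_apply, sub_mul]
  rw [Finset.sum_congr rfl fun x _ => e1 x, Finset.sum_sub_distrib]
  have h1 : (∑ x : Fin n, (if u = x then T.deg u else 0) * f x) = T.deg u * f u := by
    rw [Finset.sum_eq_single u]
    · rw [if_pos rfl]
    · intro x _ hx; rw [if_neg (fun h => hx h.symm), zero_mul]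
    · intro h; exact absurd (Finset.mem_univ _) h
  rw [h1, WGraph.deg, Finset.sum_mul, ← Finset.sum_sub_distrib]
  exact Finset.sum_congr rfl fun x _ => by ring

lemma ker_const (T : WGraph n) (hT : T.G.IsTree) {f : Fin n → ℝ}
    (hf : T.lap *ᵥ f = 0) (u v : Fin n) : f u = f v := by
  have hne : Nonempty (Fin n) := hT.isConnected.nonempty
  obtain ⟨u₀, -, hmax⟩ := Finset.exists_max_image Finset.univ f
    ⟨Classical.arbitrary _, Finset.mem_univ _⟩
  have step : ∀ x y : Fin n, f x = f u₀ → T.G.Adj x y → f y = f u₀ := by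
    intro x y hx hxy
    have h0 : (∑ z : Fin n, T.w x z * (f x - f z)) = 0 := by
      rw [← lap_mulVec_apply, hf]; rfl
    have hnn : ∀ z ∈ Finset.univ, (0:ℝ) ≤ T.w x z * (f x - f z) := by
      intro z _
      apply mul_nonneg (w_nonneg T x z)
      rw [hx]; exact sub_nonneg.mpr (hmax z (Finset.mem_univ z))
    have hz := (Finset.sum_eq_zero_iff_of_nonneg hnn).mp h0 y (Finset.mem_univ y)
    rcases mul_eq_zero.mp hz with h | h
    · exact absurd h (ne_of_gt (T.pos x y hxy))
    · have := sub_eq_zero.mp h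
      rw [← hx]; linarith
  have walkprop : ∀ {x y : Fin n} (_ : T.G.Walk x y), f x = f u₀ → f y = f u₀ := by
    intro x y p
    induction p with
    | nil => exact id
    | cons h q ih => intro hx; exact ih (step _ _ hx h)
  have hall : ∀ z : Fin n, f z = f u₀ := fun z =>
    (hT.isConnected.preconnected u₀ z).elim fun p => walkprop p rfl
  rw [hall u, hall v]

lemma lap_isHermitian (T : WGraph n) : T.lap.IsHermitian := by
  unfold Matrix.IsHermitian
  ext u v
  rw [Matrix.conjTranspose_apply, star_trivial, lap_apply, lap_apply, T.symm]
  by_cases h : u = v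
  · subst h; rfl
  · rw [if_neg h, if_neg (fun h' => h h'.symm)]

lemma Xm_mulVec_eigen (T : WGraph n) (hT : T.G.IsTree) (hn : (n:ℝ) ≠ 0)
    (hL : T.lap.IsHermitian) (i : Fin n) :
    Xm T *ᵥ ⇑(hL.eigenvectorBasis i) = (hL.eigenvalues i)⁻¹ • ⇑(hL.eigenvectorBasis i) := by
  set v : Fin n → ℝ := ⇑(hL.eigenvectorBasis i) with hv
  have hEig : T.lap *ᵥ v = hL.eigenvalues i • v := hL.mulVec_eigenvectorBasis i
  by_cases hlam : hL.eigenvalues i = 0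
  · have hker : T.lap *ᵥ v = 0 := by rw [hEig, hlam, zero_smul]
    have hconst : ∀ u u' : Fin n, v u = v u' := fun u u' => ker_const T hT hker u u'
    rw [hlam, _root_.inv_zero, zero_smul]
    funext u
    have e0 : (Xm T *ᵥ v) u = ∑ x : Fin n, Xm T u x * v x := rfl
    rw [e0, Finset.sum_congr rfl fun x _ => by rw [hconst x u], ← Finset.sum_mul,
      Xm_rowsum T hn, zero_mul]
    rfl
  · have hsum : ∑ u : Fin n, v u = 0 := by
      have h1 : ∑ u : Fin n, (T.lap *ᵥ v) u = 0 := by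
        have e0 : ∀ u : Fin n, (T.lap *ᵥ v) u = ∑ x : Fin n, T.lap u x * v x := fun u => rfl
        rw [Finset.sum_congr rfl fun u _ => e0 u, Finset.sum_comm]
        exact Finset.sum_eq_zero fun x _ => by rw [← Finset.sum_mul, lap_colsum, zero_mul]
      rw [hEig] at h1
      simp only [Pi.smul_apply, smul_eq_mul, ← Finset.mul_sum] at h1
      exact (mul_eq_zero.mp h1).resolve_left hlam
    have hQv : Qm n *ᵥ v = v := by
      funext u
      have e0 : (Qm n *ᵥ v) u = ∑ x : Fin n, Qm n u x * v x := rfl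
      have e1 : ∀ x : Fin n, Qm n u x * v x
          = (if u = x then (1:ℝ) else 0) * v x - (n:ℝ)⁻¹ * v x := by
        intro x
        rw [Qm, Matrix.sub_apply, Matrix.one_apply, sub_mul]
        rfl
      rw [e0, Finset.sum_congr rfl fun x _ => e1 x, Finset.sum_sub_distrib,
        ← Finset.mul_sum, hsum, mul_zero, sub_zero, Finset.sum_eq_single u]
      · rw [if_pos rfl, one_mul]
      · intro x _ hx; rw [if_neg (fun h => hx h.symm), zero_mul]
      · intro h; exact absurd (Finset.mem_univ _) h
    have hXv : T.lap *ᵥ (Xm T *ᵥ v) = v := by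
      rw [Matrix.mulVec_mulVec, lap_mul_Xm T hT hn, hQv]
    have hdiff : T.lap *ᵥ (Xm T *ᵥ v - (hL.eigenvalues i)⁻¹ • v) = 0 := by
      rw [Matrix.mulVec_sub, hXv, Matrix.mulVec_smul, hEig, smul_smul,
        inv_mul_cancel₀ hlam, one_smul, sub_self]
    set g : Fin n → ℝ := Xm T *ᵥ v - (hL.eigenvalues i)⁻¹ • v with hg
    have hconst : ∀ u u' : Fin n, g u = g u' := fun u u' => ker_const T hT hdiff u u'
    have hgsum : ∑ u : Fin n, g u = 0 := by
      rw [hg]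
      simp only [Pi.sub_apply, Pi.smul_apply, smul_eq_mul, Finset.sum_sub_distrib]
      rw [← Finset.mul_sum, hsum, mul_zero, sub_zero]
      have e0 : ∀ u : Fin n, (Xm T *ᵥ v) u = ∑ x : Fin n, Xm T u x * v x := fun u => rfl
      rw [Finset.sum_congr rfl fun u _ => e0 u, Finset.sum_comm]
      exact Finset.sum_eq_zero fun x _ => by rw [← Finset.sum_mul, Xm_colsum T hn, zero_mul]
    have hg0 : g = 0 := by
      funext u
      have h2 : ∑ u' : Fin n, g u' = (n:ℝ) * g u := by
        rw [Finset.sum_congr rfl fun u' _ => hconst u' u, Finset.sum_const, Finset.card_univ,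
          Fintype.card_fin, nsmul_eq_mul]
      rw [hgsum] at h2
      exact ((mul_eq_zero.mp h2.symm).resolve_left hn)
    rw [hg] at hg0
    exact sub_eq_zero.mp hg0

end Stmt6Aux
namespace Stmt6Aux

open SimpleGraph Matrix

variable {n : ℕ}

lemma trace_Xm_eq_sumInv (T : WGraph n) (hT : T.G.IsTree) (hn : (n:ℝ) ≠ 0)
    (hL : T.lap.IsHermitian) :
    Matrix.trace (Xm T) = ∑ i : Fin n, (hL.eigenvalues i)⁻¹ := by
  set U : Matrix (Fin n) (Fin n) ℝ := (hL.eigenvectorUnitary : Matrix (Fin n) (Fin n) ℝ) with hU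
  have hXU : Xm T * U
      = Matrix.of fun k j => (hL.eigenvalues j)⁻¹ * ⇑(hL.eigenvectorBasis j) k := by
    ext k j
    rw [Matrix.mul_apply, Matrix.of_apply]
    have e0 : ∀ l, U l j = ⇑(hL.eigenvectorBasis j) l := fun l => rfl
    have e1 : (∑ l : Fin n, Xm T k l * U l j)
        = (Xm T *ᵥ ⇑(hL.eigenvectorBasis j)) k := by
      rw [Finset.sum_congr rfl fun l _ => by rw [e0 l]]
      rfl
    rw [e1, Xm_mulVec_eigen T hT hn hL j]
    rfl
  have hip : ∀ i j : Fin n,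
      (∑ k : Fin n, ⇑(hL.eigenvectorBasis i) k * ⇑(hL.eigenvectorBasis j) k)
        = if i = j then (1:ℝ) else 0 := by
    intro i j
    have h := orthonormal_iff_ite.mp hL.eigenvectorBasis.orthonormal i j
    rw [← h]
    simp [PiLp.inner_apply, RCLike.inner_apply, starRingEnd_apply, star_trivial]
    exact Finset.sum_congr rfl fun _ _ => mul_comm _ _
  have hdiag : star U * (Xm T * U)
      = Matrix.diagonal (fun i => (hL.eigenvalues i)⁻¹) := by
    ext i j
    rw [hXU, Matrix.mul_apply]
    have e2 : ∀ k : Fin n, (star U) i k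
        * (Matrix.of fun k j => (hL.eigenvalues j)⁻¹ * ⇑(hL.eigenvectorBasis j) k) k j
        = (hL.eigenvalues j)⁻¹
            * (⇑(hL.eigenvectorBasis i) k * ⇑(hL.eigenvectorBasis j) k) := by
      intro k
      rw [Matrix.star_apply, star_trivial, Matrix.of_apply]
      have : U k i = ⇑(hL.eigenvectorBasis i) k := rfl
      rw [this]
      ring
    rw [Finset.sum_congr rfl fun k _ => e2 k, ← Finset.mul_sum, hip i j,
      Matrix.diagonal_apply]
    by_cases h : i = j
    · subst h; rw [if_pos rfl, if_pos rfl, mul_one]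
    · rw [if_neg h, if_neg h, mul_zero]
  have hUUstar : U * star U = 1 := (Matrix.mem_unitaryGroup_iff).mp (hL.eigenvectorUnitary).2
  have htr : Matrix.trace (star U * (Xm T * U)) = Matrix.trace (Xm T) := by
    rw [Matrix.trace_mul_comm, Matrix.mul_assoc, hUUstar, Matrix.mul_one]
  rw [← htr, hdiag, Matrix.trace_diagonal]

end Stmt6Aux
theorem stmt6 {n : ℕ} (T : WGraph n) (hT : T.G.IsTree) :
    sumInvEig T.lap =
      (1 / n) * ∑ᶠ e ∈ T.G.edgeSet, SVal (T.G.deleteEdges {e}) / T.ew e := by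
  classical
  have hne : Nonempty (Fin n) := hT.isConnected.nonempty
  have hn0 : 0 < n := Fin.pos (Classical.arbitrary (Fin n))
  have hn : (n:ℝ) ≠ 0 := Nat.cast_ne_zero.mpr hn0.ne'
  have hL : T.lap.IsHermitian := Stmt6Aux.lap_isHermitian T
  unfold sumInvEig
  rw [dif_pos hL]
  rw [← Stmt6Aux.trace_Xm_eq_sumInv T hT hn hL, Stmt6Aux.trace_Xm T hn]
  have hS : (∑ u : Fin n, ∑ v : Fin n, Stmt6Aux.Rm T u v)
      = ∑ e : Sym2 (Fin n), (if e ∈ T.G.edgeSet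
          then 2 * SVal (T.G.deleteEdges {e}) * (T.ew e)⁻¹ else 0) := by
    have swap : (∑ u : Fin n, ∑ v : Fin n, Stmt6Aux.Rm T u v)
        = ∑ e : Sym2 (Fin n), ∑ u : Fin n, ∑ v : Fin n,
            (if e ∈ T.G.edgeSet ∧ Stmt6Aux.sepd T.G e u v then (T.ew e)⁻¹ else 0) := by
      unfold Stmt6Aux.Rm
      simp only [Matrix.of_apply]
      rw [Finset.sum_congr rfl (fun u _ => Finset.sum_comm), Finset.sum_comm]
    rw [swap]
    refine Finset.sum_congr rfl fun e _ => ?_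
    induction e using Sym2.ind with
    | _ a b =>
      by_cases he : s(a,b) ∈ T.G.edgeSet
      · have hab : T.G.Adj a b := he
        rw [if_pos he]
        have e1 : ∀ u v : Fin n,
            (if s(a,b) ∈ T.G.edgeSet ∧ Stmt6Aux.sepd T.G s(a,b) u v
              then (T.ew s(a,b))⁻¹ else 0)
            = (if Stmt6Aux.sepd T.G s(a,b) u v then (1:ℝ) else 0) * (T.ew s(a,b))⁻¹ := by
          intro u v
          by_cases h : Stmt6Aux.sepd T.G s(a,b) u v
          · rw [if_pos ⟨he, h⟩, if_pos h, one_mul]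
          · rw [if_neg (fun hh => h hh.2), if_neg h, zero_mul]
        simp only [e1, ← Finset.sum_mul]
        rw [Stmt6Aux.pair_count hT hab, Stmt6Aux.SVal_eq hT hab]
        ring
      · rw [if_neg he]
        exact Finset.sum_eq_zero fun u _ => Finset.sum_eq_zero fun v _ => by
          rw [if_neg (fun h => he h.1)]
  rw [hS]
  have hfin : T.G.edgeSet.Finite := Set.toFinite _
  have hconv : (∑ᶠ e ∈ T.G.edgeSet, SVal (T.G.deleteEdges {e}) / T.ew e)
      = ∑ e : Sym2 (Fin n), (if e ∈ T.G.edgeSet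
          then SVal (T.G.deleteEdges {e}) / T.ew e else 0) := by
    have h1 : (∑ e : Sym2 (Fin n), if e ∈ T.G.edgeSet
          then SVal (T.G.deleteEdges {e}) / T.ew e else 0)
        = ∑ e ∈ hfin.toFinset, SVal (T.G.deleteEdges {e}) / T.ew e := by
      rw [← Finset.sum_filter]
      congr 1
      ext e
      rw [Finset.mem_filter, Set.Finite.mem_toFinset]
      exact ⟨fun h => h.2, fun h => ⟨Finset.mem_univ _, h⟩⟩
    have h2 : (∑ᶠ e ∈ T.G.edgeSet, SVal (T.G.deleteEdges {e}) / T.ew e)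
        = ∑ e ∈ hfin.toFinset, SVal (T.G.deleteEdges {e}) / T.ew e := by
      rw [← finsum_mem_coe_finset, Set.Finite.coe_toFinset]
    rw [h2, ← h1]
  rw [hconv, Finset.mul_sum, Finset.mul_sum]
  refine Finset.sum_congr rfl fun e _ => ?_
  by_cases he : e ∈ T.G.edgeSet
  · rw [if_pos he, if_pos he, div_eq_mul_inv, mul_inv]
    ring
  · rw [if_neg he, if_neg he, mul_zero, mul_zero]
end
end
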